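/- arXiv:2411.04506 — 2 statements merged into one kernel-verified Lean document; each statement's English description precedes it below -/
import Mathlib

section
/- Let β = (π_ℓ)_{ℓ=1}^L be a chainable architecture of depth L ≥ 2. Then B^β = ⋂_{s=1}^{L−1} B^{β_s}. Equivalently, a matrix A is a product X₁⋯X_L of π_ℓ-factors if and only if its support is contained in that of S_{π₁*⋯*π_L} and, for every s ∈ {1,…,L−1} and every P ∈ P(S_{π₁*⋯*π_s}, S_{π_{s+1}*⋯*π_L}), rank(A[R_P, C_P]) ≤ r(π_s, π_{s+1}). -/
/-- A *pattern* is a tuple `(a, b, c, d)` of (positive) natural numbers. -/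
structure Pattern where
  a : ℕ
  b : ℕ
  c : ℕ
  d : ℕ

namespace Pattern

/-- The entries of a pattern are positive integers. -/
def Pos (π : Pattern) : Prop := 0 < π.a ∧ 0 < π.b ∧ 0 < π.c ∧ 0 < π.d

/-- Number of rows `a*b*d` of a `π`-factor. -/
def rows (π : Pattern) : ℕ := π.a * π.b * π.d

/-- Number of columns `a*c*d` of a `π`-factor. -/
def cols (π : Pattern) : ℕ := π.a * π.c * π.d

/-- `r(π₁, π₂) = a₁c₁/a₂ (= b₂d₂/d₁)`. -/
def rk (π₁ π₂ : Pattern) : ℕ := π₁.a * π₁.c / π₂.a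

/-- A pair of patterns is *chainable* if `a₁c₁/a₂ = b₂d₂/d₁` is a positive integer,
`a₁ ∣ a₂` and `d₂ ∣ d₁`. -/
def Chainable (π₁ π₂ : Pattern) : Prop :=
  π₂.a ∣ π₁.a * π₁.c ∧ π₁.d ∣ π₂.b * π₂.d ∧
    π₁.a * π₁.c / π₂.a = π₂.b * π₂.d / π₁.d ∧
    0 < π₁.a * π₁.c / π₂.a ∧ π₁.a ∣ π₂.a ∧ π₂.d ∣ π₁.d

/-- `π₁ * π₂ := (a₁, b₁d₁/d₂, a₂c₂/a₁, d₂)`. -/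
instance : Mul Pattern :=
  ⟨fun π₁ π₂ => ⟨π₁.a, π₁.b * π₁.d / π₂.d, π₂.a * π₂.c / π₁.a, π₂.d⟩⟩

/-- `‖π‖₀ := a*b*c*d`. -/
def norm0 (π : Pattern) : ℕ := π.a * π.b * π.c * π.d

end Pattern

open scoped Kronecker

/-- The flattening equivalence `(Fin a × Fin b) × Fin d ≃ Fin (a*b*d)`. -/
def kron3Equiv (a b d : ℕ) : (Fin a × Fin b) × Fin d ≃ Fin (a * b * d) :=
  (finProdFinEquiv.prodCongr (Equiv.refl (Fin d))).trans finProdFinEquiv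

/-- The support matrix `S_π = I_a ⊗ 1_{b×c} ⊗ I_d ∈ {0,1}^{abd × acd}`. -/
def Pattern.S (π : Pattern) : Matrix (Fin π.rows) (Fin π.cols) ℕ :=
  Matrix.reindex (kron3Equiv π.a π.b π.d) (kron3Equiv π.a π.c π.d)
    ((1 : Matrix (Fin π.a) (Fin π.a) ℕ) ⊗ₖ
      (Matrix.of fun _ _ => (1 : ℕ) : Matrix (Fin π.b) (Fin π.c) ℕ) ⊗ₖ
      (1 : Matrix (Fin π.d) (Fin π.d) ℕ))

/-- The support matrix `S_π`, extended by zero to an `ℕ × ℕ`-indexed array. -/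
def SpatN (π : Pattern) : ℕ → ℕ → ℕ := fun i j =>
  if h : i < π.rows ∧ j < π.cols then π.S ⟨i, h.1⟩ ⟨j, h.2⟩ else 0

/-- `X` is (the extension by zero of) a `π`-factor: it vanishes outside the support of `S_π`. -/
def IsFactorN (π : Pattern) (X : ℕ → ℕ → ℂ) : Prop :=
  ∀ i j, SpatN π i j = 0 → X i j = 0

/-- Product of matrices encoded as finitely supported `ℕ × ℕ`-indexed arrays. -/
noncomputable def nmul (f g : ℕ → ℕ → ℂ) : ℕ → ℕ → ℂ := fun i j => ∑' k, f i k * g k j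

/-- `nprod X k = X 0 * X 1 * ⋯ * X k`. -/
noncomputable def nprod (X : ℕ → ℕ → ℕ → ℂ) : ℕ → ℕ → ℕ → ℂ
  | 0 => X 0
  | k + 1 => nmul (nprod X k) (X (k + 1))

/-- Frobenius norm. -/
noncomputable def nfrob (f : ℕ → ℕ → ℂ) : ℝ := Real.sqrt (∑' i, ∑' j, ‖f i j‖ ^ 2)

/-- `A` is (the extension by zero of) a matrix of size `m × n`. -/
def SuppIn (m n : ℕ) (A : ℕ → ℕ → ℂ) : Prop := ∀ i j, A i j ≠ 0 → i < m ∧ j < n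

/-- The set `B^β` of butterfly matrices for the architecture `β = (π 0, …, π (L-1))`. -/
def Bset (π : ℕ → Pattern) (L : ℕ) : Set (ℕ → ℕ → ℂ) :=
  { M | ∃ X : ℕ → ℕ → ℕ → ℂ, (∀ ℓ < L, IsFactorN (π ℓ) (X ℓ)) ∧ M = nprod X (L - 1) }

/-- Partial products of patterns: `pprod π q k = π q * π (q+1) * ⋯ * π (q+k)`. -/
def pprod (π : ℕ → Pattern) (q : ℕ) : ℕ → Pattern
  | 0 => π q
  | k + 1 => pprod π q k * π (q + k + 1)

/-- The two-pattern architecture `(p, q)`. -/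
def pairArch (p q : Pattern) : ℕ → Pattern := fun ℓ => if ℓ = 0 then p else q

/-- Rank-one contribution supports for `ℕ × ℕ`-indexed binary arrays. -/
def contribN (Lf Rf : ℕ → ℕ → ℕ) (k : ℕ) : ℕ → ℕ → ℕ := fun i j => Lf i k * Rf k j

open scoped Classical in
/-- The equivalence classes `P(L,R)` of `k ∼ k' ↔ U_k = U_k'` on `{0, …, r-1}`. -/
noncomputable def classesN (Lf Rf : ℕ → ℕ → ℕ) (r : ℕ) : Finset (Finset ℕ) :=
  (Finset.range r).image fun k =>
    (Finset.range r).filter fun k' => contribN Lf Rf k' = contribN Lf Rf k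

open scoped Classical in
/-- `R_P`: nonzero rows of the common rank-one support of the class `P`. -/
noncomputable def rowSuppN (Lf Rf : ℕ → ℕ → ℕ) (m : ℕ) (P : Finset ℕ) : Finset ℕ :=
  (Finset.range m).filter fun i => ∃ k ∈ P, ∃ j, contribN Lf Rf k i j ≠ 0

open scoped Classical in
/-- `C_P`: nonzero columns of the common rank-one support of the class `P`. -/
noncomputable def colSuppN (Lf Rf : ℕ → ℕ → ℕ) (n : ℕ) (P : Finset ℕ) : Finset ℕ :=
  (Finset.range n).filter fun j => ∃ k ∈ P, ∃ i, contribN Lf Rf k i j ≠ 0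

/-- The rank of the submatrix `A[Rs, Cs]`. -/
noncomputable def rankOn (A : ℕ → ℕ → ℂ) (Rs Cs : Finset ℕ) : ℕ :=
  (Matrix.of fun (i : Rs) (j : Cs) => A i.1 j.1).rank

namespace Bf

/-! ### Closed form of the support matrix -/

theorem spatN_eq (π : Pattern) (i j : ℕ) :
    SpatN π i j = if i < π.rows ∧ j < π.cols ∧ i / (π.b * π.d) = j / (π.c * π.d)
      ∧ i % π.d = j % π.d then 1 else 0 := by
  unfold SpatN Pattern.S kron3Equiv
  by_cases h : i < π.rows ∧ j < π.cols
  · simp only [h, dif_pos]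
    simp [Matrix.reindex, Matrix.submatrix, Matrix.kroneckerMap, Matrix.one_apply,
      finProdFinEquiv, Equiv.prodCongr, Fin.ext_iff, Fin.modNat, Fin.divNat,
      Nat.div_div_eq_div_mul]
    rw [Nat.mul_comm π.b π.d, Nat.mul_comm π.c π.d]
    by_cases h1 : i / (π.d * π.b) = j / (π.d * π.c) <;> by_cases h2 : i % π.d = j % π.d <;>
      erw [Matrix.of_apply] <;> simp [h1, h2]
  · simp only [h, dif_neg, not_false_iff]
    rw [if_neg]; tauto

theorem spatN_ne_iff (π : Pattern) (i j : ℕ) :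
    SpatN π i j ≠ 0 ↔ (i < π.rows ∧ j < π.cols ∧ i / (π.b * π.d) = j / (π.c * π.d)
      ∧ i % π.d = j % π.d) := by
  rw [spatN_eq]; split <;> simp_all

/-! ### Pattern arithmetic -/

open Pattern

theorem chainable_dims {ρ τ : Pattern} (hc : ρ.Chainable τ) : ρ.cols = τ.rows := by
  obtain ⟨h1, h2, h3, h4, h5, h6⟩ := hc
  have hτa : 0 < τ.a := by
    rcases Nat.eq_zero_or_pos τ.a with h | h
    · rw [h] at h4; simp at h4
    · exact h
  have hρd : 0 < ρ.d := by
    rcases Nat.eq_zero_or_pos ρ.d with h | h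
    · rw [h3, h] at h4; simp at h4
    · exact h
  have hx : ρ.a * ρ.c = τ.a * (ρ.a * ρ.c / τ.a) := (Nat.mul_div_cancel' h1).symm
  have hy : τ.b * τ.d = ρ.d * (τ.b * τ.d / ρ.d) := (Nat.mul_div_cancel' h2).symm
  show ρ.a * ρ.c * ρ.d = τ.a * τ.b * τ.d
  rw [Nat.mul_assoc τ.a, hy, ← h3]
  nth_rewrite 1 [hx]
  ring

/-- archOK: positivity and chainability hypotheses along `[0, L)`. -/
def ArchOK (π : ℕ → Pattern) (L : ℕ) : Prop :=
  (∀ ℓ < L, (π ℓ).Pos) ∧ (∀ ℓ, ℓ + 1 < L → Chainable (π ℓ) (π (ℓ + 1)))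

theorem dvd_a {π : ℕ → Pattern} {L : ℕ} (h : ArchOK π L) :
    ∀ p q, p ≤ q → q < L → (π p).a ∣ (π q).a := by
  intro p q hpq hq
  induction q with
  | zero => simp_all
  | succ q ih =>
    rcases Nat.lt_or_ge p (q+1) with hl | hl
    · exact dvd_trans (ih (Nat.lt_succ_iff.mp hl) (Nat.lt_of_succ_lt hq))
        (h.2 q hq).2.2.2.2.1
    · have : p = q + 1 := le_antisymm hpq hl
      subst this; rfl

theorem dvd_d {π : ℕ → Pattern} {L : ℕ} (h : ArchOK π L) :
    ∀ p q, p ≤ q → q < L → (π q).d ∣ (π p).d := by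
  intro p q hpq hq
  induction q with
  | zero => simp_all
  | succ q ih =>
    rcases Nat.lt_or_ge p (q+1) with hl | hl
    · exact dvd_trans (h.2 q hq).2.2.2.2.2
        (ih (Nat.lt_succ_iff.mp hl) (Nat.lt_of_succ_lt hq))
    · have : p = q + 1 := le_antisymm hpq hl
      subst this; rfl

/-- The closed-form spec of partial products. -/
structure PSpec (π : ℕ → Pattern) (q k : ℕ) (F : Pattern) : Prop where
  ha : F.a = (π q).a
  hd : F.d = (π (q + k)).d
  hbd : F.b * F.d = (π q).b * (π q).d
  hac : F.a * F.c = (π (q + k)).a * (π (q + k)).c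
  hpos : F.Pos

theorem pos_bd {F : Pattern} (h : F.Pos) : 0 < F.b * F.d := Nat.mul_pos h.2.1 h.2.2.2
theorem pos_ac {F : Pattern} (h : F.Pos) : 0 < F.a * F.c := Nat.mul_pos h.1 h.2.2.1

theorem pprod_spec {π : ℕ → Pattern} {L : ℕ} (h : ArchOK π L) :
    ∀ k q, q + k < L → PSpec π q k (pprod π q k) := by
  intro k
  induction k with
  | zero =>
    intro q hq
    exact ⟨rfl, rfl, rfl, rfl, h.1 q (by omega)⟩
  | succ k ih =>
    intro q hq
    have hs := ih q (by omega)
    have hpos' : (π (q + k + 1)).Pos := h.1 _ (by omega)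
    set F := pprod π q k with hF
    set π' := π (q + k + 1) with hπ'
    have hdd : π'.d ∣ F.d := hs.hd ▸ dvd_d h (q+k) (q+k+1) (by omega) (by omega)
    have hda : F.a ∣ π'.a := hs.ha ▸ dvd_a h q (q+k+1) (by omega) (by omega)
    have hdd' : π'.d ∣ F.b * F.d := hdd.trans (dvd_mul_left F.d F.b)
    have hda' : F.a ∣ π'.a * π'.c := hda.trans (dvd_mul_right π'.a π'.c)
    show PSpec π q (k+1) (F * π')
    refine ⟨hs.ha, rfl, ?_, ?_, hs.hpos.1, ?_, ?_, hpos'.2.2.2⟩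
    · show (F.b * F.d / π'.d) * π'.d = (π q).b * (π q).d
      rw [Nat.div_mul_cancel hdd', hs.hbd]
    · show F.a * (π'.a * π'.c / F.a) = (π (q+(k+1))).a * (π (q+(k+1))).c
      rw [Nat.mul_div_cancel' hda']; rfl
    · show 0 < F.b * F.d / π'.d
      exact Nat.div_pos (Nat.le_of_dvd (pos_bd hs.hpos) hdd') hpos'.2.2.2
    · show 0 < π'.a * π'.c / F.a
      exact Nat.div_pos (Nat.le_of_dvd (pos_ac hpos') hda') hs.hpos.1

theorem pprod_chainable {π : ℕ → Pattern} {L : ℕ} (h : ArchOK π L) (q k k' : ℕ)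
    (hL : q + k + 1 + k' < L) :
    Pattern.Chainable (pprod π q k) (pprod π (q + k + 1) k') := by
  have hF := pprod_spec h k q (by omega)
  have hG := pprod_spec h k' (q + k + 1) (by omega)
  have hch := h.2 (q + k) (by omega)
  set F := pprod π q k
  set G := pprod π (q + k + 1) k'
  obtain ⟨h1, h2, h3, h4, h5, h6⟩ := hch
  refine ⟨?_, ?_, ?_, ?_, ?_, ?_⟩
  · rw [hF.hac, hG.ha]; exact h1
  · rw [hF.hd, hG.hbd]; exact h2
  · rw [hF.hac, hG.ha, hF.hd, hG.hbd]; exact h3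
  · rw [hF.hac, hG.ha]; exact h4
  · rw [hF.ha, hG.ha]; exact dvd_a h q (q+k+1) (by omega) (by omega)
  · rw [hF.hd, hG.hd]; exact dvd_d h (q+k) (q+k+1+k') (by omega) (by omega)

theorem pprod_rk {π : ℕ → Pattern} {L : ℕ} (h : ArchOK π L) (q k k' : ℕ)
    (hL : q + k + 1 + k' < L) :
    Pattern.rk (pprod π q k) (pprod π (q + k + 1) k') =
      Pattern.rk (π (q + k)) (π (q + k + 1)) := by
  have hF := pprod_spec h k q (by omega)
  have hG := pprod_spec h k' (q + k + 1) (by omega)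
  unfold Pattern.rk
  rw [hF.hac, hG.ha]

theorem pattern_mul_assoc {F G p : Pattern} (h1 : G.d ∣ F.b * F.d) (h2 : G.a ∣ p.a * p.c) :
    F * G * p = F * (G * p) := by
  show Pattern.mk _ _ _ _ = Pattern.mk _ _ _ _
  rw [Pattern.mk.injEq]
  refine ⟨rfl, ?_, ?_, rfl⟩
  · show (F.b * F.d / G.d) * G.d / p.d = F.b * F.d / (G * p).d
    rw [Nat.div_mul_cancel h1]; rfl
  · show p.a * p.c / (F * G).a = (G.a * (p.a * p.c / G.a)) / F.a
    rw [Nat.mul_div_cancel' h2]; rfl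

theorem pprod_mul {π : ℕ → Pattern} {L : ℕ} (h : ArchOK π L) (q k : ℕ) :
    ∀ k', q + k + 1 + k' < L →
      pprod π q k * pprod π (q + k + 1) k' = pprod π q (k + k' + 1) := by
  intro k'
  induction k' with
  | zero => intro _; rfl
  | succ k' ih =>
    intro hL
    have hF := pprod_spec h k q (by omega)
    have hG := pprod_spec h k' (q + k + 1) (by omega)
    have h1 : (pprod π (q+k+1) k').d ∣ (pprod π q k).b * (pprod π q k).d := by
      rw [hG.hd]
      exact (dvd_d h (q+k) (q+k+1+k') (by omega) (by omega)).trans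
        (hF.hd ▸ dvd_mul_left _ _)
    have h2 : (pprod π (q+k+1) k').a ∣ (π (q+k+1+k'+1)).a * (π (q+k+1+k'+1)).c := by
      rw [hG.ha]
      exact (dvd_a h (q+k+1) (q+k+1+k'+1) (by omega) (by omega)).trans (dvd_mul_right _ _)
    show pprod π q k * (pprod π (q+k+1) k' * π (q+k+1+k'+1)) = _
    rw [← pattern_mul_assoc h1 h2, ih (by omega)]
    show pprod π q (k+k'+1) * π (q+k+1+k'+1) = pprod π q (k+k'+1) * π (q+(k+k'+1)+1)
    congr 2
    omega
end Bf
namespace Bf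

/-! ### nmul / nprod infrastructure -/

theorem suppIn_mono {m n m' n' : ℕ} {f : ℕ → ℕ → ℂ} (h : SuppIn m n f)
    (hm : m ≤ m') (hn : n ≤ n') : SuppIn m' n' f := by
  intro i j hij
  obtain ⟨h1, h2⟩ := h i j hij
  omega

theorem factor_suppIn {π : Pattern} {X : ℕ → ℕ → ℂ} (h : IsFactorN π X) :
    SuppIn π.rows π.cols X := by
  intro i j hij
  by_contra hb
  push_neg at hb
  apply hij
  apply h
  rw [spatN_eq, if_neg]
  intro hcon
  have := hb hcon.1
  omega

theorem factor_spat_ne {π : Pattern} {X : ℕ → ℕ → ℂ} (h : IsFactorN π X)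
    {i j : ℕ} (hij : X i j ≠ 0) : SpatN π i j ≠ 0 :=
  fun h0 => hij (h i j h0)

theorem nmul_eq_sum {f g : ℕ → ℕ → ℂ} {i j N : ℕ}
    (h : ∀ k, N ≤ k → f i k * g k j = 0) :
    nmul f g i j = ∑ k ∈ Finset.range N, f i k * g k j :=
  tsum_eq_sum (fun k hk => h k (by simpa using hk))

theorem nmul_eq_zero {f g : ℕ → ℕ → ℂ} {i j : ℕ}
    (h : ∀ k, f i k * g k j = 0) : nmul f g i j = 0 := by
  unfold nmul
  have : (fun k => f i k * g k j) = fun _ => 0 := funext h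
  rw [this, tsum_zero]

theorem nmul_suppIn {m n q : ℕ} {f g : ℕ → ℕ → ℂ} (hf : SuppIn m n f)
    (hg : SuppIn n q g) : SuppIn m q (nmul f g) := by
  intro i j hij
  by_contra hb
  push_neg at hb
  apply hij
  apply nmul_eq_zero
  intro k
  rcases Nat.lt_or_ge i m with him | him
  · rcases Nat.lt_or_ge j q with hjq | hjq
    · omega
    · rcases Classical.em (g k j = 0) with h0 | h0
      · rw [h0, mul_zero]
      · exact absurd (hg k j h0).2 (by omega)
  · rcases Classical.em (f i k = 0) with h0 | h0
    · rw [h0, zero_mul]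
    · exact absurd (hf i k h0).1 (by omega)

theorem nmul_assoc {m n : ℕ} {f g h : ℕ → ℕ → ℂ} (hg : SuppIn m n g) :
    nmul (nmul f g) h = nmul f (nmul g h) := by
  have hg' : ∀ l k, ¬ (l < m ∧ k < n) → g l k = 0 := by
    intro l k hlk
    by_contra h0
    exact hlk (hg l k h0)
  funext i j
  have e1 : ∀ k, nmul f g i k = ∑ l ∈ Finset.range m, f i l * g l k := by
    intro k
    apply tsum_eq_sum
    intro l hl
    simp only [Finset.mem_range, not_lt] at hl
    rw [hg' l k (by omega), mul_zero]
  have e2 : ∀ l, nmul g h l j = ∑ k ∈ Finset.range n, g l k * h k j := by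
    intro l
    apply tsum_eq_sum
    intro k hk
    simp only [Finset.mem_range, not_lt] at hk
    rw [hg' l k (by omega), zero_mul]
  have lhs : nmul (nmul f g) h i j = ∑ k ∈ Finset.range n, (nmul f g i k) * h k j := by
    apply tsum_eq_sum
    intro k hk
    simp only [Finset.mem_range, not_lt] at hk
    have : nmul f g i k = 0 := by
      apply nmul_eq_zero
      intro l
      rw [hg' l k (by omega), mul_zero]
    rw [this, zero_mul]
  have rhs : nmul f (nmul g h) i j = ∑ l ∈ Finset.range m, f i l * (nmul g h l j) := by
    apply tsum_eq_sum
    intro l hl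
    simp only [Finset.mem_range, not_lt] at hl
    have : nmul g h l j = 0 := by
      apply nmul_eq_zero
      intro k
      rw [hg' l k (by omega), zero_mul]
    rw [this, mul_zero]
  rw [lhs, rhs]
  simp only [e1, e2, Finset.sum_mul, Finset.mul_sum, mul_assoc]
  exact Finset.sum_comm

theorem nprod_congr {X X' : ℕ → ℕ → ℕ → ℂ} :
    ∀ k, (∀ ℓ ≤ k, X ℓ = X' ℓ) → nprod X k = nprod X' k := by
  intro k
  induction k with
  | zero => intro h; exact h 0 le_rfl
  | succ k ih =>
    intro h
    show nmul (nprod X k) (X (k+1)) = nmul (nprod X' k) (X' (k+1))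
    rw [ih (fun ℓ hℓ => h ℓ (by omega)), h (k+1) le_rfl]

theorem nprod_suppIn {X : ℕ → ℕ → ℕ → ℂ} {d : ℕ → ℕ} :
    ∀ k, (∀ ℓ ≤ k, SuppIn (d ℓ) (d (ℓ+1)) (X ℓ)) → SuppIn (d 0) (d (k+1)) (nprod X k) := by
  intro k
  induction k with
  | zero => intro h; exact h 0 le_rfl
  | succ k ih =>
    intro h
    exact nmul_suppIn (ih (fun ℓ hℓ => h ℓ (by omega))) (h (k+1) le_rfl)

theorem nprod_split {X : ℕ → ℕ → ℕ → ℂ} {d : ℕ → ℕ} (s : ℕ) :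
    ∀ t, (∀ ℓ ≤ s + 1 + t, SuppIn (d ℓ) (d (ℓ+1)) (X ℓ)) →
      nprod X (s + 1 + t) = nmul (nprod X s) (nprod (fun ℓ => X (s + 1 + ℓ)) t) := by
  intro t
  induction t with
  | zero => intro _; rfl
  | succ t ih =>
    intro h
    have hmid : SuppIn (d (s+1)) (d (s+1+t+1)) (nprod (fun ℓ => X (s + 1 + ℓ)) t) := by
      have := nprod_suppIn (X := fun ℓ => X (s+1+ℓ)) (d := fun ℓ => d (s+1+ℓ)) t
        (fun ℓ hℓ => h (s+1+ℓ) (by omega))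
      exact this
    show nmul (nprod X (s + 1 + t)) (X (s+1+t+1)) = _
    rw [ih (fun ℓ hℓ => h ℓ (by omega))]
    rw [nmul_assoc hmid]
    rfl

end Bf
namespace Bf

/-! ### Classes of a chainable pair -/

def Pcl (ρ τ : Pattern) (α δ : ℕ) : Finset ℕ :=
  (Finset.range τ.rows).filter fun k => k / (τ.b * τ.d) = α ∧ k % ρ.d = δ

def Rcl (ρ τ : Pattern) (α δ : ℕ) : Finset ℕ :=
  (Finset.range ρ.rows).filter fun i =>
    i / (ρ.b * ρ.d) = α / (τ.a / ρ.a) ∧ i % ρ.d = δ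

def Ccl (ρ τ : Pattern) (α δ : ℕ) : Finset ℕ :=
  (Finset.range τ.cols).filter fun j => j / (τ.c * τ.d) = α ∧ j % τ.d = δ % τ.d

theorem mem_Pcl {ρ τ : Pattern} {α δ k : ℕ} :
    k ∈ Pcl ρ τ α δ ↔ k < τ.rows ∧ k / (τ.b * τ.d) = α ∧ k % ρ.d = δ := by
  simp [Pcl, and_assoc]

theorem mem_Rcl {ρ τ : Pattern} {α δ i : ℕ} :
    i ∈ Rcl ρ τ α δ ↔ i < ρ.rows ∧ i / (ρ.b * ρ.d) = α / (τ.a / ρ.a) ∧ i % ρ.d = δ := by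
  simp [Rcl, and_assoc]

theorem mem_Ccl {ρ τ : Pattern} {α δ j : ℕ} :
    j ∈ Ccl ρ τ α δ ↔ j < τ.cols ∧ j / (τ.c * τ.d) = α ∧ j % τ.d = δ % τ.d := by
  simp [Ccl, and_assoc]

theorem rows_eq (π : Pattern) : π.rows = π.a * (π.b * π.d) := (Nat.mul_assoc _ _ _)
theorem cols_eq (π : Pattern) : π.cols = π.a * (π.c * π.d) := (Nat.mul_assoc _ _ _)

section ChainFacts
variable {ρ τ : Pattern}

theorem cg (hc : ρ.Chainable τ) : ρ.a * (τ.a / ρ.a) = τ.a := Nat.mul_div_cancel' hc.2.2.2.2.1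

theorem cgpos (hρ : ρ.Pos) (hτ : τ.Pos) (hc : ρ.Chainable τ) : 0 < τ.a / ρ.a :=
  Nat.div_pos (Nat.le_of_dvd hτ.1 hc.2.2.2.2.1) hρ.1

theorem ckey (hρ : ρ.Pos) (hτ : τ.Pos) (hc : ρ.Chainable τ) : ρ.c * ρ.d = τ.b * τ.d * (τ.a / ρ.a) := by
  have e : ρ.a * (ρ.c * ρ.d) = τ.a * (τ.b * τ.d) := by
    have := chainable_dims hc
    rw [cols_eq, rows_eq] at this
    exact this
  apply Nat.eq_of_mul_eq_mul_left hρ.1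
  rw [e]
  conv_lhs => rw [← cg hc]
  ring

theorem div_param (hρ : ρ.Pos) (hτ : τ.Pos) (hc : ρ.Chainable τ) (k : ℕ) : k / (ρ.c * ρ.d) = k / (τ.b * τ.d) / (τ.a / ρ.a) := by
  rw [Nat.div_div_eq_div_mul, ckey hρ hτ hc]

theorem cdvd_bd (hc : ρ.Chainable τ) : τ.d ∣ ρ.b * ρ.d := hc.2.2.2.2.2.trans (dvd_mul_left _ _)
theorem cdvd_ac (hc : ρ.Chainable τ) : ρ.a ∣ τ.a * τ.c := hc.2.2.2.2.1.trans (dvd_mul_right _ _)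

theorem crows (hc : ρ.Chainable τ) : (ρ * τ).rows = ρ.rows := by
  show ρ.a * (ρ.b * ρ.d / τ.d) * τ.d = ρ.rows
  rw [Nat.mul_assoc, Nat.div_mul_cancel (cdvd_bd hc), ← Nat.mul_assoc]; rfl

theorem ccols (hc : ρ.Chainable τ) : (ρ * τ).cols = τ.cols := by
  show ρ.a * (τ.a * τ.c / ρ.a) * τ.d = τ.cols
  rw [Nat.mul_div_cancel' (cdvd_ac hc)]; rfl

theorem cbd (hc : ρ.Chainable τ) : (ρ * τ).b * (ρ * τ).d = ρ.b * ρ.d := by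
  show ρ.b * ρ.d / τ.d * τ.d = ρ.b * ρ.d
  exact Nat.div_mul_cancel (cdvd_bd hc)

theorem ccd (hρ : ρ.Pos) (hc : ρ.Chainable τ) : (ρ * τ).c * (ρ * τ).d = τ.c * τ.d * (τ.a / ρ.a) := by
  show τ.a * τ.c / ρ.a * τ.d = τ.c * τ.d * (τ.a / ρ.a)
  have : τ.a * τ.c = ρ.a * (τ.a / ρ.a * τ.c) := by rw [← Nat.mul_assoc, cg hc]
  rw [this, Nat.mul_div_cancel_left _ hρ.1]
  ring

theorem crk (hc : ρ.Chainable τ) : τ.b * τ.d / ρ.d = ρ.rk τ := hc.2.2.1.symm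

theorem crmul (hc : ρ.Chainable τ) : ρ.d * ρ.rk τ = τ.b * τ.d := by
  rw [← crk hc]
  exact Nat.mul_div_cancel' hc.2.1

/-- witness row index -/
theorem iW_mem (hρ : ρ.Pos) (hτ : τ.Pos) (hc : ρ.Chainable τ) {α δ : ℕ} (hα : α < τ.a) (hδ : δ < ρ.d) :
    δ + α / (τ.a / ρ.a) * (ρ.b * ρ.d) ∈ Rcl ρ τ α δ := by
  have hbd : 0 < ρ.b * ρ.d := pos_bd hρ
  have hδ' : δ < ρ.b * ρ.d := lt_of_lt_of_le hδ (Nat.le_mul_of_pos_left _ hρ.2.1)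
  have hq : α / (τ.a / ρ.a) < ρ.a := by
    rw [Nat.div_lt_iff_lt_mul (cgpos hρ hτ hc)]
    calc α < τ.a := hα
    _ = ρ.a * (τ.a / ρ.a) := (cg hc).symm
  rw [mem_Rcl]
  refine ⟨?_, ?_, ?_⟩
  · rw [rows_eq]
    calc δ + α / (τ.a / ρ.a) * (ρ.b * ρ.d) < (α / (τ.a / ρ.a) + 1) * (ρ.b * ρ.d) := by
          rw [Nat.add_mul, Nat.one_mul]; omega
    _ ≤ ρ.a * (ρ.b * ρ.d) := Nat.mul_le_mul_right _ hq
  · rw [Nat.add_mul_div_right _ _ hbd, Nat.div_eq_of_lt hδ', Nat.zero_add]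
  · rw [Nat.mul_comm ρ.b ρ.d, ← Nat.mul_assoc, Nat.mul_comm _ ρ.d, Nat.mul_assoc,
      Nat.add_mul_mod_self_left, Nat.mod_eq_of_lt hδ]

/-- witness column index -/
theorem jW_mem (hρ : ρ.Pos) (hτ : τ.Pos) (hc : ρ.Chainable τ) {α δ : ℕ} (hα : α < τ.a) :
    δ % τ.d + α * (τ.c * τ.d) ∈ Ccl ρ τ α δ := by
  have hcd : 0 < τ.c * τ.d := Nat.mul_pos hτ.2.2.1 hτ.2.2.2
  have hδ' : δ % τ.d < τ.c * τ.d :=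
    lt_of_lt_of_le (Nat.mod_lt _ hτ.2.2.2) (Nat.le_mul_of_pos_left _ hτ.2.2.1)
  rw [mem_Ccl]
  refine ⟨?_, ?_, ?_⟩
  · rw [cols_eq]
    calc δ % τ.d + α * (τ.c * τ.d) < (α + 1) * (τ.c * τ.d) := by
          rw [Nat.add_mul, Nat.one_mul]; omega
    _ ≤ τ.a * (τ.c * τ.d) := Nat.mul_le_mul_right _ hα
  · rw [Nat.add_mul_div_right _ _ hcd, Nat.div_eq_of_lt hδ', Nat.zero_add]
  · rw [Nat.mul_comm τ.c τ.d, ← Nat.mul_assoc, Nat.mul_comm _ τ.d, Nat.mul_assoc,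
      Nat.add_mul_mod_self_left, Nat.mod_mod_of_dvd _ dvd_rfl]

/-- witness middle index -/
theorem kW_mem (hρ : ρ.Pos) (hτ : τ.Pos) (hc : ρ.Chainable τ) {α δ : ℕ} (hα : α < τ.a) (hδ : δ < ρ.d) :
    δ + α * (τ.b * τ.d) ∈ Pcl ρ τ α δ := by
  have hbd : 0 < τ.b * τ.d := pos_bd hτ
  have hδ' : δ < τ.b * τ.d := lt_of_lt_of_le hδ (Nat.le_of_dvd hbd hc.2.1)
  rw [mem_Pcl]
  obtain ⟨c, hcc⟩ := hc.2.1
  refine ⟨?_, ?_, ?_⟩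
  · rw [rows_eq]
    calc δ + α * (τ.b * τ.d) < (α + 1) * (τ.b * τ.d) := by
          rw [Nat.add_mul, Nat.one_mul]; omega
    _ ≤ τ.a * (τ.b * τ.d) := Nat.mul_le_mul_right _ hα
  · rw [Nat.add_mul_div_right _ _ hbd, Nat.div_eq_of_lt hδ', Nat.zero_add]
  · rw [hcc, ← Nat.mul_assoc, Nat.mul_comm _ ρ.d, Nat.mul_assoc,
      Nat.add_mul_mod_self_left, Nat.mod_eq_of_lt hδ]

end ChainFacts
end Bf
namespace Bf
section ChainFacts2
variable {ρ τ : Pattern}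

theorem spatL_eq_ind (hρ : ρ.Pos) (hτ : τ.Pos) (hc : ρ.Chainable τ) {k : ℕ}
    (hk : k < τ.rows) (i : ℕ) :
    SpatN ρ i k = if i ∈ Rcl ρ τ (k / (τ.b * τ.d)) (k % ρ.d) then 1 else 0 := by
  rw [spatN_eq]
  apply if_congr _ rfl rfl
  rw [mem_Rcl]
  have hkc : k < ρ.cols := by rw [chainable_dims hc]; exact hk
  have e3 := div_param hρ hτ hc k
  constructor
  · rintro ⟨h1, _, h3, h4⟩
    exact ⟨h1, by rw [h3, e3], h4⟩
  · rintro ⟨h1, h3, h4⟩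
    exact ⟨h1, hkc, by rw [h3, e3], h4⟩

theorem spatR_eq_ind (hρ : ρ.Pos) (hτ : τ.Pos) (hc : ρ.Chainable τ) {k : ℕ}
    (hk : k < τ.rows) (j : ℕ) :
    SpatN τ k j = if j ∈ Ccl ρ τ (k / (τ.b * τ.d)) (k % ρ.d) then 1 else 0 := by
  rw [spatN_eq]
  apply if_congr _ rfl rfl
  rw [mem_Ccl]
  have e4 : k % ρ.d % τ.d = k % τ.d := Nat.mod_mod_of_dvd k hc.2.2.2.2.2
  constructor
  · rintro ⟨_, h2, h3, h4⟩
    exact ⟨h2, h3.symm, by rw [e4, h4]⟩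
  · rintro ⟨h2, h3, h4⟩
    exact ⟨hk, h2, h3.symm, by rw [h4, e4]⟩

theorem contrib_eq (hρ : ρ.Pos) (hτ : τ.Pos) (hc : ρ.Chainable τ) {k : ℕ}
    (hk : k < τ.rows) (i j : ℕ) :
    contribN (SpatN ρ) (SpatN τ) k i j =
      if i ∈ Rcl ρ τ (k / (τ.b * τ.d)) (k % ρ.d) ∧ j ∈ Ccl ρ τ (k / (τ.b * τ.d)) (k % ρ.d)
      then 1 else 0 := by
  unfold contribN
  rw [spatL_eq_ind hρ hτ hc hk, spatR_eq_ind hρ hτ hc hk]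
  rcases Classical.em (i ∈ Rcl ρ τ (k / (τ.b * τ.d)) (k % ρ.d)) with h1 | h1 <;>
    rcases Classical.em (j ∈ Ccl ρ τ (k / (τ.b * τ.d)) (k % ρ.d)) with h2 | h2 <;>
    simp [h1, h2]

theorem param_lt (hτ : τ.Pos) {k : ℕ} (hk : k < τ.rows) : k / (τ.b * τ.d) < τ.a := by
  rw [Nat.div_lt_iff_lt_mul (pos_bd hτ)]
  rw [rows_eq] at hk
  omega

theorem contrib_param_iff (hρ : ρ.Pos) (hτ : τ.Pos) (hc : ρ.Chainable τ) {k k' : ℕ}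
    (hk : k < τ.rows) (hk' : k' < τ.rows) :
    contribN (SpatN ρ) (SpatN τ) k' = contribN (SpatN ρ) (SpatN τ) k ↔
      k' / (τ.b * τ.d) = k / (τ.b * τ.d) ∧ k' % ρ.d = k % ρ.d := by
  constructor
  · intro h
    have hα : k / (τ.b * τ.d) < τ.a := param_lt hτ hk
    have hδ : k % ρ.d < ρ.d := Nat.mod_lt _ hρ.2.2.2
    set α := k / (τ.b * τ.d)
    set δ := k % ρ.d
    have hi := iW_mem hρ hτ hc hα hδ
    have hj := jW_mem hρ hτ hc (δ := δ) hα
    set i := δ + α / (τ.a / ρ.a) * (ρ.b * ρ.d)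
    set j := δ % τ.d + α * (τ.c * τ.d)
    have h1 : contribN (SpatN ρ) (SpatN τ) k i j = 1 := by
      rw [contrib_eq hρ hτ hc hk, if_pos ⟨hi, hj⟩]
    have h2 : contribN (SpatN ρ) (SpatN τ) k' i j ≠ 0 := by
      rw [h]; rw [h1]; exact one_ne_zero
    rw [contrib_eq hρ hτ hc hk'] at h2
    split at h2
    · rename_i hmem
      obtain ⟨hiR, hjC⟩ := hmem
      rw [mem_Rcl] at hiR hi
      rw [mem_Ccl] at hjC hj
      constructor
      · rw [← hjC.2.1, hj.2.1]
      · rw [← hiR.2.2, hi.2.2]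
    · exact absurd rfl h2
  · intro ⟨h1, h2⟩
    funext i j
    rw [contrib_eq hρ hτ hc hk, contrib_eq hρ hτ hc hk', h1, h2]

theorem classes_iff (hρ : ρ.Pos) (hτ : τ.Pos) (hc : ρ.Chainable τ) {P : Finset ℕ} :
    P ∈ classesN (SpatN ρ) (SpatN τ) ρ.cols ↔
      ∃ α, α < τ.a ∧ ∃ δ, δ < ρ.d ∧ P = Pcl ρ τ α δ := by
  classical
  unfold classesN
  rw [chainable_dims hc, Finset.mem_image]
  constructor
  · rintro ⟨k, hk, rfl⟩
    rw [Finset.mem_range] at hk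
    refine ⟨k / (τ.b * τ.d), param_lt hτ hk, k % ρ.d, Nat.mod_lt _ hρ.2.2.2, ?_⟩
    ext k'
    rw [Finset.mem_filter, Finset.mem_range, mem_Pcl]
    constructor
    · rintro ⟨h1, h2⟩
      exact ⟨h1, (contrib_param_iff hρ hτ hc hk h1).mp h2⟩
    · rintro ⟨h1, h2⟩
      exact ⟨h1, (contrib_param_iff hρ hτ hc hk h1).mpr h2⟩
  · rintro ⟨α, hα, δ, hδ, rfl⟩
    have hkW := kW_mem hρ hτ hc hα hδ
    rw [mem_Pcl] at hkW
    refine ⟨δ + α * (τ.b * τ.d), Finset.mem_range.mpr hkW.1, ?_⟩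
    ext k'
    rw [Finset.mem_filter, Finset.mem_range, mem_Pcl]
    constructor
    · rintro ⟨h1, h2⟩
      have := (contrib_param_iff hρ hτ hc hkW.1 h1).mp h2
      exact ⟨h1, by rw [this.1, hkW.2.1], by rw [this.2, hkW.2.2]⟩
    · rintro ⟨h1, h2, h3⟩
      refine ⟨h1, (contrib_param_iff hρ hτ hc hkW.1 h1).mpr ?_⟩
      rw [hkW.2.1, hkW.2.2, h2, h3]
      exact ⟨rfl, rfl⟩

theorem rowSupp_eq (hρ : ρ.Pos) (hτ : τ.Pos) (hc : ρ.Chainable τ) {α δ : ℕ}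
    (hα : α < τ.a) (hδ : δ < ρ.d) :
    rowSuppN (SpatN ρ) (SpatN τ) ρ.rows (Pcl ρ τ α δ) = Rcl ρ τ α δ := by
  classical
  unfold rowSuppN
  ext i
  rw [Finset.mem_filter, Finset.mem_range]
  constructor
  · rintro ⟨h1, k, hk, j, hcontrib⟩
    rw [mem_Pcl] at hk
    rw [contrib_eq hρ hτ hc hk.1, hk.2.1, hk.2.2] at hcontrib
    split at hcontrib
    · rename_i hmem; exact hmem.1
    · exact absurd rfl hcontrib
  · intro hi
    have hi' := hi
    rw [mem_Rcl] at hi'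
    refine ⟨hi'.1, δ + α * (τ.b * τ.d), kW_mem hρ hτ hc hα hδ,
      δ % τ.d + α * (τ.c * τ.d), ?_⟩
    have hkW := kW_mem hρ hτ hc hα hδ
    rw [mem_Pcl] at hkW
    rw [contrib_eq hρ hτ hc hkW.1, hkW.2.1, hkW.2.2,
      if_pos ⟨hi, jW_mem hρ hτ hc hα⟩]
    exact one_ne_zero

theorem colSupp_eq (hρ : ρ.Pos) (hτ : τ.Pos) (hc : ρ.Chainable τ) {α δ : ℕ}
    (hα : α < τ.a) (hδ : δ < ρ.d) :
    colSuppN (SpatN ρ) (SpatN τ) τ.cols (Pcl ρ τ α δ) = Ccl ρ τ α δ := by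
  classical
  unfold colSuppN
  ext j
  rw [Finset.mem_filter, Finset.mem_range]
  constructor
  · rintro ⟨h1, k, hk, i, hcontrib⟩
    rw [mem_Pcl] at hk
    rw [contrib_eq hρ hτ hc hk.1, hk.2.1, hk.2.2] at hcontrib
    split at hcontrib
    · rename_i hmem; exact hmem.2
    · exact absurd rfl hcontrib
  · intro hj
    have hj' := hj
    rw [mem_Ccl] at hj'
    refine ⟨hj'.1, δ + α * (τ.b * τ.d), kW_mem hρ hτ hc hα hδ,
      δ + α / (τ.a / ρ.a) * (ρ.b * ρ.d), ?_⟩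
    have hkW := kW_mem hρ hτ hc hα hδ
    rw [mem_Pcl] at hkW
    rw [contrib_eq hρ hτ hc hkW.1, hkW.2.1, hkW.2.2,
      if_pos ⟨iW_mem hρ hτ hc hα hδ, hj⟩]
    exact one_ne_zero

end ChainFacts2
end Bf
namespace Bf
section ChainFacts3
variable {ρ τ : Pattern}

theorem card_Pcl (hρ : ρ.Pos) (hτ : τ.Pos) (hc : ρ.Chainable τ) {α δ : ℕ}
    (hα : α < τ.a) (hδ : δ < ρ.d) : (Pcl ρ τ α δ).card = ρ.rk τ := by
  classical
  have hbd : 0 < τ.b * τ.d := pos_bd hτ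
  have hdpos : 0 < ρ.d := hρ.2.2.2
  have hrm : ρ.d * ρ.rk τ = τ.b * τ.d := crmul hc
  have himg : Pcl ρ τ α δ =
      (Finset.range (ρ.rk τ)).image (fun t => δ + ρ.d * t + α * (τ.b * τ.d)) := by
    ext k
    rw [mem_Pcl, Finset.mem_image]
    constructor
    · rintro ⟨h1, h2, h3⟩
      set u := k % (τ.b * τ.d) with hu
      have hu1 : u < τ.b * τ.d := Nat.mod_lt _ hbd
      have hu2 : u % ρ.d = δ := by
        rw [hu, Nat.mod_mod_of_dvd _ hc.2.1, h3]
      have hk2 : τ.b * τ.d * α + u = k := by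
        conv_rhs => rw [← Nat.div_add_mod k (τ.b * τ.d)]
        rw [h2]
      set t := u / ρ.d with ht
      have hu3 : ρ.d * t + δ = u := by
        rw [ht, ← hu2]; exact Nat.div_add_mod u ρ.d
      refine ⟨t, Finset.mem_range.mpr ?_, ?_⟩
      · rw [Nat.div_lt_iff_lt_mul hdpos, Nat.mul_comm, hrm]; exact hu1
      · rw [← hk2, ← hu3]; ring
    · rintro ⟨t, ht, rfl⟩
      rw [Finset.mem_range] at ht
      have hsmall : δ + ρ.d * t < τ.b * τ.d := by
        calc δ + ρ.d * t < ρ.d * (t + 1) := by rw [Nat.mul_add]; omega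
        _ ≤ ρ.d * ρ.rk τ := Nat.mul_le_mul_left _ (by omega)
        _ = τ.b * τ.d := hrm
      refine ⟨?_, ?_, ?_⟩
      · rw [rows_eq]
        calc δ + ρ.d * t + α * (τ.b * τ.d) < (α + 1) * (τ.b * τ.d) := by
              rw [Nat.add_mul, Nat.one_mul]; omega
        _ ≤ τ.a * (τ.b * τ.d) := Nat.mul_le_mul_right _ hα
      · rw [Nat.add_mul_div_right _ _ hbd, Nat.div_eq_of_lt hsmall, Nat.zero_add]
      · rw [← hrm]
        have : α * (ρ.d * ρ.rk τ) = α * ρ.rk τ * ρ.d := by ring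
        rw [this, Nat.add_mul_mod_self_right, Nat.mul_comm ρ.d t,
          Nat.add_mul_mod_self_right, Nat.mod_eq_of_lt hδ]
  rw [himg, Finset.card_image_of_injective _ ?_, Finset.card_range]
  intro t t' htt
  have h1 := Nat.add_right_cancel htt
  have h2 := Nat.add_left_cancel h1
  exact Nat.eq_of_mul_eq_mul_left hdpos h2

theorem class_disj {α δ α' δ' i j : ℕ} (hi : i ∈ Rcl ρ τ α δ) (hj : j ∈ Ccl ρ τ α δ)
    (hi' : i ∈ Rcl ρ τ α' δ') (hj' : j ∈ Ccl ρ τ α' δ') : α = α' ∧ δ = δ' := by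
  rw [mem_Rcl] at hi hi'
  rw [mem_Ccl] at hj hj'
  exact ⟨by rw [← hj.2.1, hj'.2.1], by rw [← hi.2.2, hi'.2.2]⟩

theorem spat_mul_ne (hρ : ρ.Pos) (hτ : τ.Pos) (hc : ρ.Chainable τ) {i j : ℕ} :
    SpatN (ρ * τ) i j ≠ 0 ↔
      ∃ α, α < τ.a ∧ ∃ δ, δ < ρ.d ∧ i ∈ Rcl ρ τ α δ ∧ j ∈ Ccl ρ τ α δ := by
  have hcd : 0 < τ.c * τ.d := Nat.mul_pos hτ.2.2.1 hτ.2.2.2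
  rw [spatN_ne_iff, crows hc, ccols hc]
  have hmd : (ρ * τ).d = τ.d := rfl
  constructor
  · rintro ⟨h1, h2, h3, h4⟩
    rw [cbd hc, ccd hρ hc] at h3
    rw [hmd] at h4
    refine ⟨j / (τ.c * τ.d), ?_, i % ρ.d, Nat.mod_lt _ hρ.2.2.2, ?_, ?_⟩
    · rw [Nat.div_lt_iff_lt_mul hcd]
      rw [cols_eq] at h2
      omega
    · rw [mem_Rcl]
      exact ⟨h1, by rw [h3, Nat.div_div_eq_div_mul], rfl⟩
    · rw [mem_Ccl]
      exact ⟨h2, rfl, by rw [Nat.mod_mod_of_dvd _ hc.2.2.2.2.2, h4]⟩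
  · rintro ⟨α, hα, δ, hδ, hiR, hjC⟩
    rw [mem_Rcl] at hiR
    rw [mem_Ccl] at hjC
    refine ⟨hiR.1, hjC.1, ?_, ?_⟩
    · rw [cbd hc, ccd hρ hc]
      conv_rhs => rw [← Nat.div_div_eq_div_mul]
      rw [hiR.2.1, hjC.2.1]
    · rw [hmd, ← Nat.mod_mod_of_dvd i hc.2.2.2.2.2, hiR.2.2, hjC.2.2]

theorem spat_comp (hρ : ρ.Pos) (hτ : τ.Pos) (hc : ρ.Chainable τ) {i k j : ℕ}
    (h1 : SpatN ρ i k ≠ 0) (h2 : SpatN τ k j ≠ 0) : SpatN (ρ * τ) i j ≠ 0 := by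
  rw [spatN_ne_iff] at h1 h2
  rw [spat_mul_ne hρ hτ hc]
  refine ⟨k / (τ.b * τ.d), param_lt hτ h2.1, k % ρ.d, Nat.mod_lt _ hρ.2.2.2, ?_, ?_⟩
  · rw [mem_Rcl]
    exact ⟨h1.1, by rw [h1.2.2.1, div_param hρ hτ hc], h1.2.2.2⟩
  · rw [mem_Ccl]
    exact ⟨h2.2.1, h2.2.2.1.symm,
      by rw [Nat.mod_mod_of_dvd k hc.2.2.2.2.2, h2.2.2.2]⟩

theorem spat_middle (hρ : ρ.Pos) (hτ : τ.Pos) (hc : ρ.Chainable τ) {i k j α δ : ℕ}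
    (h1 : SpatN ρ i k ≠ 0) (h2 : SpatN τ k j ≠ 0) (hiR : i ∈ Rcl ρ τ α δ)
    (hjC : j ∈ Ccl ρ τ α δ) : k ∈ Pcl ρ τ α δ := by
  rw [spatN_ne_iff] at h1 h2
  rw [mem_Rcl] at hiR
  rw [mem_Ccl] at hjC
  rw [mem_Pcl]
  exact ⟨h2.1, by rw [h2.2.2.1, hjC.2.1], by rw [← h1.2.2.2, hiR.2.2]⟩

end ChainFacts3
end Bf
namespace Bf

/-! ### Rank lemmas -/

theorem rank_le_of_cols_in_span {m n n' : Type} [Fintype n] [Fintype n']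
    (A : Matrix m n ℂ) (B : Matrix m n' ℂ)
    (h : ∀ j, (fun i => B i j) ∈ Submodule.span ℂ (Set.range A.transpose)) :
    B.rank ≤ A.rank := by
  rw [Matrix.rank_eq_finrank_span_cols, Matrix.rank_eq_finrank_span_cols,
    show Set.range A.col = Set.range A.transpose from rfl,
    show Set.range B.col = Set.range B.transpose from rfl]
  haveI : FiniteDimensional ℂ (Submodule.span ℂ (Set.range A.transpose)) :=
    FiniteDimensional.span_of_finite ℂ (Set.finite_range _)
  apply Submodule.finrank_mono
  rw [Submodule.span_le]
  rintro v ⟨j, rfl⟩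
  exact h j

theorem rank_mul_le_card_mid {mty kty nty : Type} [Fintype kty] [Fintype nty]
    (X : Matrix mty kty ℂ) (Y : Matrix kty nty ℂ) :
    (X * Y).rank ≤ Fintype.card kty :=
  le_trans (Matrix.rank_mul_le_left X Y) (Matrix.rank_le_card_width X)

theorem exists_rank_factorization {m n : Type} [Fintype m] [Fintype n] [DecidableEq n]
    (M : Matrix m n ℂ) (r : ℕ) (h : M.rank ≤ r) :
    ∃ (B : Matrix m (Fin r) ℂ) (C : Matrix (Fin r) n ℂ),
      M = B * C ∧ ∀ t, (fun i => B i t) ∈ Submodule.span ℂ (Set.range M.transpose) := by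
  classical
  set V := Submodule.span ℂ (Set.range M.transpose) with hV
  haveI : FiniteDimensional ℂ V := FiniteDimensional.span_of_finite ℂ (Set.finite_range _)
  set t0 := Module.finrank ℂ V with ht0
  have ht0r : t0 ≤ r := by
    rw [ht0, hV, show Set.range M.transpose = Set.range M.col from rfl,
      ← Matrix.rank_eq_finrank_span_cols]
    exact h
  set b := Module.finBasis ℂ V with hb
  have hmem : ∀ j, M.transpose j ∈ V := fun j => Submodule.subset_span ⟨j, rfl⟩
  set w : ℕ → m → ℂ := fun k => if hk : k < t0 then ((b ⟨k, hk⟩ : V) : m → ℂ) else 0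
    with hw
  set c : n → ℕ → ℂ :=
    fun j k => if hk : k < t0 then b.repr ⟨M.transpose j, hmem j⟩ ⟨k, hk⟩ else 0 with hcdef
  have hw0 : ∀ k, t0 ≤ k → ∀ i, w k i = 0 := by
    intro k hk i
    rw [hw]; simp only [dif_neg (by omega : ¬ k < t0)]; rfl
  refine ⟨fun i k => w (k : ℕ) i, fun k j => c j (k : ℕ), ?_, ?_⟩
  · ext i j
    show M i j = ∑ k : Fin r, w (k : ℕ) i * c j (k : ℕ)
    have e1 : (∑ k : Fin r, w (k : ℕ) i * c j (k : ℕ)) =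
        ∑ k ∈ Finset.range r, w k i * c j k :=
      Fin.sum_univ_eq_sum_range (fun k => w k i * c j k) r
    have e2 : (∑ k ∈ Finset.range r, w k i * c j k) = ∑ k ∈ Finset.range t0, w k i * c j k := by
      apply (Finset.sum_subset (Finset.range_subset_range.mpr ht0r) _).symm
      intro x _ hx
      rw [Finset.mem_range, not_lt] at hx
      rw [hw0 x hx i, zero_mul]
    have e3 : (∑ k ∈ Finset.range t0, w k i * c j k) = ∑ k : Fin t0, w (k : ℕ) i * c j (k : ℕ) :=
      (Fin.sum_univ_eq_sum_range (fun k => w k i * c j k) t0).symm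
    rw [e1, e2, e3]
    have hrepr := b.sum_repr ⟨M.transpose j, hmem j⟩
    have hcoe := congrArg (Subtype.val) hrepr
    rw [Submodule.coe_sum] at hcoe
    have hfun := congrFun hcoe i
    simp only [Finset.sum_apply, SetLike.val_smul, Pi.smul_apply, smul_eq_mul,
      Matrix.transpose_apply] at hfun
    symm
    calc (∑ k : Fin t0, w (k : ℕ) i * c j (k : ℕ))
        = ∑ k : Fin t0, (b.repr ⟨M.transpose j, hmem j⟩) k * ((b k : V) : m → ℂ) i := by
          apply Finset.sum_congr rfl
          intro k _
          rw [hw, hcdef]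
          simp only [dif_pos k.isLt, Fin.eta]
          ring
      _ = M i j := hfun
  · intro t
    show w (t : ℕ) ∈ V
    rw [hw]
    by_cases ht : (t : ℕ) < t0
    · simp only [dif_pos ht]
      exact (b ⟨t, ht⟩).2
    · simp only [dif_neg ht]
      exact Submodule.zero_mem _

end Bf
namespace Bf
section Construct
variable {ρ τ : Pattern}

theorem Pcl_mem_self {k : ℕ} (hk : k < τ.rows) :
    k ∈ Pcl ρ τ (k / (τ.b * τ.d)) (k % ρ.d) := mem_Pcl.mpr ⟨hk, rfl, rfl⟩

/-- The submatrix `A[R_P, C_P]` for the class with parameters `(α, δ)`. -/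
def blockM (ρ τ : Pattern) (A : ℕ → ℕ → ℂ) (α δ : ℕ) :
    Matrix ↥(Rcl ρ τ α δ) ↥(Ccl ρ τ α δ) ℂ := Matrix.of fun i j => A i.1 j.1

theorem construct_two (hρ : ρ.Pos) (hτ : τ.Pos) (hc : ρ.Chainable τ) (A : ℕ → ℕ → ℂ)
    (hA : IsFactorN (ρ * τ) A)
    (hrk : ∀ α δ, α < τ.a → δ < ρ.d → (blockM ρ τ A α δ).rank ≤ ρ.rk τ) :
    ∃ f g, IsFactorN ρ f ∧ IsFactorN τ g ∧ A = nmul f g ∧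
      ∀ k (hk : k < τ.rows),
        (fun i : ↥(Rcl ρ τ (k / (τ.b * τ.d)) (k % ρ.d)) => f i.1 k) ∈
          Submodule.span ℂ
            (Set.range (blockM ρ τ A (k / (τ.b * τ.d)) (k % ρ.d)).transpose) := by
  classical
  have hdρ : 0 < ρ.d := hρ.2.2.2
  have hcard : ∀ α δ, α < τ.a → δ < ρ.d → (Pcl ρ τ α δ).card = ρ.rk τ :=
    fun α δ hα hδ => card_Pcl hρ hτ hc hα hδ
  have hex : ∀ α δ, ∃ (B : Matrix ↥(Rcl ρ τ α δ) (Fin (ρ.rk τ)) ℂ)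
      (C : Matrix (Fin (ρ.rk τ)) ↥(Ccl ρ τ α δ) ℂ),
      α < τ.a → δ < ρ.d → (blockM ρ τ A α δ = B * C ∧
        ∀ t, (fun i => B i t) ∈ Submodule.span ℂ
          (Set.range (blockM ρ τ A α δ).transpose)) := by
    intro α δ
    by_cases hαδ : α < τ.a ∧ δ < ρ.d
    · obtain ⟨B, C, h1, h2⟩ :=
        exists_rank_factorization (blockM ρ τ A α δ) _ (hrk α δ hαδ.1 hαδ.2)
      exact ⟨B, C, fun _ _ => ⟨h1, h2⟩⟩
    · exact ⟨0, 0, fun h1 h2 => absurd ⟨h1, h2⟩ hαδ⟩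
  choose Bch Cch hBC using hex
  set idx : ∀ k, k < τ.rows → Fin (ρ.rk τ) := fun k hk =>
    ((Pcl ρ τ (k / (τ.b * τ.d)) (k % ρ.d)).orderIsoOfFin
      (hcard _ _ (param_lt hτ hk) (Nat.mod_lt _ hdρ))).symm ⟨k, Pcl_mem_self hk⟩
    with hidxdef
  set f : ℕ → ℕ → ℂ := fun i k =>
    if h : k < τ.rows ∧ i ∈ Rcl ρ τ (k / (τ.b * τ.d)) (k % ρ.d) then
      Bch (k / (τ.b * τ.d)) (k % ρ.d) ⟨i, h.2⟩ (idx k h.1) else 0 with hf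
  set g : ℕ → ℕ → ℂ := fun k j =>
    if h : k < τ.rows ∧ j ∈ Ccl ρ τ (k / (τ.b * τ.d)) (k % ρ.d) then
      Cch (k / (τ.b * τ.d)) (k % ρ.d) (idx k h.1) ⟨j, h.2⟩ else 0 with hg
  have f0 : ∀ i k, ¬(k < τ.rows ∧ i ∈ Rcl ρ τ (k / (τ.b * τ.d)) (k % ρ.d)) → f i k = 0 :=
    fun i k h => dif_neg h
  have g0 : ∀ k j, ¬(k < τ.rows ∧ j ∈ Ccl ρ τ (k / (τ.b * τ.d)) (k % ρ.d)) → g k j = 0 :=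
    fun k j h => dif_neg h
  have fpos : ∀ i k (h : k < τ.rows ∧ i ∈ Rcl ρ τ (k / (τ.b * τ.d)) (k % ρ.d)),
      f i k = Bch (k / (τ.b * τ.d)) (k % ρ.d) ⟨i, h.2⟩ (idx k h.1) :=
    fun i k h => dif_pos h
  have gpos : ∀ k j (h : k < τ.rows ∧ j ∈ Ccl ρ τ (k / (τ.b * τ.d)) (k % ρ.d)),
      g k j = Cch (k / (τ.b * τ.d)) (k % ρ.d) (idx k h.1) ⟨j, h.2⟩ :=
    fun k j h => dif_pos h
  refine ⟨f, g, ?_, ?_, ?_, ?_⟩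
  · -- IsFactorN ρ f
    intro i k h0
    apply f0
    intro h
    have hval := spatL_eq_ind hρ hτ hc h.1 i
    rw [if_pos h.2, h0] at hval
    exact zero_ne_one hval
  · -- IsFactorN τ g
    intro k j h0
    apply g0
    intro h
    have hval := spatR_eq_ind hρ hτ hc h.1 j
    rw [if_pos h.2, h0] at hval
    exact zero_ne_one hval
  · -- A = nmul f g
    funext i j
    symm
    have hsum : nmul f g i j = ∑ k ∈ Finset.range τ.rows, f i k * g k j := by
      apply tsum_eq_sum
      intro k hk
      rw [Finset.mem_range, not_lt] at hk
      rw [f0 i k (by intro h; omega), zero_mul]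
    by_cases hS : SpatN (ρ * τ) i j ≠ 0
    · obtain ⟨α, hα, δ, hδ, hiR, hjC⟩ := (spat_mul_ne hρ hτ hc).mp hS
      set e := (Pcl ρ τ α δ).orderIsoOfFin (hcard α δ hα hδ) with he
      have hPsub : Pcl ρ τ α δ ⊆ Finset.range τ.rows := by
        intro k hk; rw [Finset.mem_range]; exact (mem_Pcl.mp hk).1
      have hzero : ∀ k ∈ Finset.range τ.rows, k ∉ Pcl ρ τ α δ → f i k * g k j = 0 := by
        intro k hkr hkP
        rw [Finset.mem_range] at hkr
        rcases Classical.em (k < τ.rows ∧ i ∈ Rcl ρ τ (k / (τ.b * τ.d)) (k % ρ.d))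
          with h1 | h1
        · rcases Classical.em (k < τ.rows ∧ j ∈ Ccl ρ τ (k / (τ.b * τ.d)) (k % ρ.d))
            with h2 | h2
          · exfalso
            have hd := class_disj hiR hjC h1.2 h2.2
            exact hkP (mem_Pcl.mpr ⟨hkr, hd.1.symm, hd.2.symm⟩)
          · rw [g0 k j h2, mul_zero]
        · rw [f0 i k h1, zero_mul]
      have hstep : (∑ k ∈ Finset.range τ.rows, f i k * g k j) =
          ∑ k ∈ Pcl ρ τ α δ, f i k * g k j := (Finset.sum_subset hPsub hzero).symm
      have hcoe : (∑ k ∈ Pcl ρ τ α δ, f i k * g k j) =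
          ∑ x : ↥(Pcl ρ τ α δ), f i x.1 * g x.1 j :=
        (Finset.sum_coe_sort _ _).symm
      have hbij : (∑ x : ↥(Pcl ρ τ α δ), f i x.1 * g x.1 j) =
          ∑ t : Fin (ρ.rk τ), f i ((e t) : ℕ) * g ((e t) : ℕ) j :=
        (Equiv.sum_comp e.toEquiv (fun x => f i x.1 * g x.1 j)).symm
      have hBchc : ∀ (p q : ℕ) (h1 : p = α) (h2 : q = δ) (hi' : i ∈ Rcl ρ τ p q)
          (t' : Fin (ρ.rk τ)), Bch p q ⟨i, hi'⟩ t' = Bch α δ ⟨i, hiR⟩ t' := by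
        rintro p q rfl rfl hi' t'; rfl
      have hCchc : ∀ (p q : ℕ) (h1 : p = α) (h2 : q = δ) (hj' : j ∈ Ccl ρ τ p q)
          (t' : Fin (ρ.rk τ)), Cch p q t' ⟨j, hj'⟩ = Cch α δ t' ⟨j, hjC⟩ := by
        rintro p q rfl rfl hj' t'; rfl
      have hidx_congr : ∀ (k : ℕ) (hk : k < τ.rows) (h1 : k / (τ.b * τ.d) = α)
          (h2 : k % ρ.d = δ),
          idx k hk = e.symm ⟨k, mem_Pcl.mpr ⟨hk, h1, h2⟩⟩ := by
        rintro k hk rfl rfl; rfl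
      have hterm : ∀ t : Fin (ρ.rk τ), f i ((e t) : ℕ) * g ((e t) : ℕ) j =
          Bch α δ ⟨i, hiR⟩ t * Cch α δ t ⟨j, hjC⟩ := by
        intro t
        obtain ⟨hk, h2, h3⟩ := mem_Pcl.mp (e t).2
        have hiR' : i ∈ Rcl ρ τ (((e t) : ℕ) / (τ.b * τ.d)) (((e t) : ℕ) % ρ.d) := by
          rw [h2, h3]; exact hiR
        have hjC' : j ∈ Ccl ρ τ (((e t) : ℕ) / (τ.b * τ.d)) (((e t) : ℕ) % ρ.d) := by
          rw [h2, h3]; exact hjC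
        have hidx2 : idx ((e t) : ℕ) hk = t := by
          rw [hidx_congr _ hk h2 h3]
          exact e.symm_apply_apply t
        rw [fpos i _ ⟨hk, hiR'⟩, gpos _ j ⟨hk, hjC'⟩, hidx2,
          hBchc _ _ h2 h3 hiR', hCchc _ _ h2 h3 hjC']
      rw [hsum, hstep, hcoe, hbij, Finset.sum_congr rfl (fun t _ => hterm t),
        ← Matrix.mul_apply, ← (hBC α δ hα hδ).1]
      rfl
    · push_neg at hS
      rw [hsum]
      have hterm0 : ∀ k ∈ Finset.range τ.rows, f i k * g k j = 0 := by
        intro k hkr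
        rcases Classical.em (k < τ.rows ∧ i ∈ Rcl ρ τ (k / (τ.b * τ.d)) (k % ρ.d))
          with h1 | h1
        · rcases Classical.em (k < τ.rows ∧ j ∈ Ccl ρ τ (k / (τ.b * τ.d)) (k % ρ.d))
            with h2 | h2
          · exfalso
            have : SpatN (ρ * τ) i j ≠ 0 := by
              rw [spat_mul_ne hρ hτ hc]
              exact ⟨k / (τ.b * τ.d), param_lt hτ h1.1, k % ρ.d, Nat.mod_lt _ hdρ,
                h1.2, h2.2⟩
            exact this hS
          · rw [g0 k j h2, mul_zero]
        · rw [f0 i k h1, zero_mul]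
      rw [Finset.sum_congr rfl hterm0, Finset.sum_const, smul_zero]
      exact (hA i j hS).symm
  · -- span property
    intro k hk
    have heq : (fun i : ↥(Rcl ρ τ (k / (τ.b * τ.d)) (k % ρ.d)) => f i.1 k) =
        fun i => Bch (k / (τ.b * τ.d)) (k % ρ.d) i (idx k hk) := by
      funext i
      rw [fpos i.1 k ⟨hk, i.2⟩]
    rw [heq]
    exact (hBC (k / (τ.b * τ.d)) (k % ρ.d) (param_lt hτ hk) (Nat.mod_lt _ hdρ)).2 _

end Construct
end Bf
namespace Bf
section TwoFactor
variable {ρ τ : Pattern}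

theorem factor_nmul (hρ : ρ.Pos) (hτ : τ.Pos) (hc : ρ.Chainable τ) {f g : ℕ → ℕ → ℂ}
    (hf : IsFactorN ρ f) (hg : IsFactorN τ g) : IsFactorN (ρ * τ) (nmul f g) := by
  intro i j h0
  apply nmul_eq_zero
  intro k
  rcases Classical.em (f i k = 0) with h1 | h1
  · rw [h1, zero_mul]
  rcases Classical.em (g k j = 0) with h2 | h2
  · rw [h2, mul_zero]
  exact absurd h0 (spat_comp hρ hτ hc (factor_spat_ne hf h1) (factor_spat_ne hg h2))

theorem pair_mem_iff (A : ℕ → ℕ → ℂ) :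
    A ∈ Bset (pairArch ρ τ) 2 ↔
      ∃ f g, IsFactorN ρ f ∧ IsFactorN τ g ∧ A = nmul f g := by
  constructor
  · rintro ⟨X, hfac, rfl⟩
    exact ⟨X 0, X 1, hfac 0 (by omega), hfac 1 (by omega), rfl⟩
  · rintro ⟨f, g, hf, hg, rfl⟩
    refine ⟨fun ℓ => if ℓ = 0 then f else g, ?_, rfl⟩
    intro ℓ hℓ
    interval_cases ℓ
    · exact hf
    · exact hg

theorem blockM_factor_eq (hρ : ρ.Pos) (hτ : τ.Pos) (hc : ρ.Chainable τ)
    {f g : ℕ → ℕ → ℂ} (hf : IsFactorN ρ f) (hg : IsFactorN τ g) {α δ : ℕ}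
    (hα : α < τ.a) (hδ : δ < ρ.d) :
    blockM ρ τ (nmul f g) α δ =
      (Matrix.of fun (i : ↥(Rcl ρ τ α δ)) (k : ↥(Pcl ρ τ α δ)) => f i.1 k.1) *
      (Matrix.of fun (k : ↥(Pcl ρ τ α δ)) (j : ↥(Ccl ρ τ α δ)) => g k.1 j.1) := by
  ext i j
  rw [Matrix.mul_apply]
  show nmul f g i.1 j.1 = _
  have hs1 : nmul f g i.1 j.1 = ∑ k ∈ Pcl ρ τ α δ, f i.1 k * g k j.1 := by
    apply tsum_eq_sum
    intro k hk
    rcases Classical.em (f i.1 k = 0) with h1 | h1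
    · rw [h1, zero_mul]
    rcases Classical.em (g k j.1 = 0) with h2 | h2
    · rw [h2, mul_zero]
    exact absurd (spat_middle hρ hτ hc (factor_spat_ne hf h1) (factor_spat_ne hg h2)
      i.2 j.2) hk
  rw [hs1, ← Finset.sum_coe_sort]
  rfl

theorem rank_of_factors (hρ : ρ.Pos) (hτ : τ.Pos) (hc : ρ.Chainable τ)
    {f g : ℕ → ℕ → ℂ} (hf : IsFactorN ρ f) (hg : IsFactorN τ g) {α δ : ℕ}
    (hα : α < τ.a) (hδ : δ < ρ.d) :
    (blockM ρ τ (nmul f g) α δ).rank ≤ ρ.rk τ := by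
  rw [blockM_factor_eq hρ hτ hc hf hg hα hδ]
  calc ((Matrix.of fun (i : ↥(Rcl ρ τ α δ)) (k : ↥(Pcl ρ τ α δ)) => f i.1 k.1) *
      (Matrix.of fun (k : ↥(Pcl ρ τ α δ)) (j : ↥(Ccl ρ τ α δ)) => g k.1 j.1)).rank
      ≤ Fintype.card ↥(Pcl ρ τ α δ) := rank_mul_le_card_mid _ _
    _ = (Pcl ρ τ α δ).card := Fintype.card_coe _
    _ = ρ.rk τ := card_Pcl hρ hτ hc hα hδ

theorem two_factor (hρ : ρ.Pos) (hτ : τ.Pos) (hc : ρ.Chainable τ) (A : ℕ → ℕ → ℂ) :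
    (∃ f g, IsFactorN ρ f ∧ IsFactorN τ g ∧ A = nmul f g) ↔
      (IsFactorN (ρ * τ) A ∧
        ∀ P ∈ classesN (SpatN ρ) (SpatN τ) ρ.cols,
          rankOn A (rowSuppN (SpatN ρ) (SpatN τ) ρ.rows P)
            (colSuppN (SpatN ρ) (SpatN τ) τ.cols P) ≤ ρ.rk τ) := by
  constructor
  · rintro ⟨f, g, hf, hg, rfl⟩
    refine ⟨factor_nmul hρ hτ hc hf hg, ?_⟩
    intro P hP
    obtain ⟨α, hα, δ, hδ, rfl⟩ := (classes_iff hρ hτ hc).mp hP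
    rw [rowSupp_eq hρ hτ hc hα hδ, colSupp_eq hρ hτ hc hα hδ]
    exact rank_of_factors hρ hτ hc hf hg hα hδ
  · rintro ⟨hA, hranks⟩
    have hrk : ∀ α δ, α < τ.a → δ < ρ.d → (blockM ρ τ A α δ).rank ≤ ρ.rk τ := by
      intro α δ hα hδ
      have := hranks (Pcl ρ τ α δ)
        ((classes_iff hρ hτ hc).mpr ⟨α, hα, δ, hδ, rfl⟩)
      rw [rowSupp_eq hρ hτ hc hα hδ, colSupp_eq hρ hτ hc hα hδ] at this
      exact this
    obtain ⟨f, g, hf, hg, hfg, _⟩ := construct_two hρ hτ hc A hA hrk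
    exact ⟨f, g, hf, hg, hfg⟩

end TwoFactor
end Bf
namespace Bf

theorem nprod_factor {π : ℕ → Pattern} {L : ℕ} (h : ArchOK π L) (q : ℕ) :
    ∀ k, q + k < L → ∀ (X : ℕ → ℕ → ℕ → ℂ), (∀ ℓ ≤ k, IsFactorN (π (q + ℓ)) (X ℓ)) →
      IsFactorN (pprod π q k) (nprod X k) := by
  intro k
  induction k with
  | zero => intro _ X hX; exact hX 0 le_rfl
  | succ k ih =>
    intro hqk X hX
    have hch : Pattern.Chainable (pprod π q k) (π (q + k + 1)) := by
      have := pprod_chainable h q k 0 (by omega)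
      exact this
    exact factor_nmul (pprod_spec h k q (by omega)).hpos (h.1 _ (by omega)) hch
      (ih (by omega) X (fun ℓ hℓ => hX ℓ (by omega))) (hX (k + 1) le_rfl)

/-- dims function for a finite architecture -/
def dimsOf (π : ℕ → Pattern) (L : ℕ) : ℕ → ℕ := fun ℓ =>
  if ℓ ≤ L - 1 then (π ℓ).rows else (π (L - 1)).cols

theorem dims_suppIn {π : ℕ → Pattern} {L : ℕ} (h : ArchOK π L) (hL : 1 ≤ L)
    {X : ℕ → ℕ → ℕ → ℂ} (hX : ∀ ℓ < L, IsFactorN (π ℓ) (X ℓ)) :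
    ∀ ℓ ≤ L - 1, SuppIn (dimsOf π L ℓ) (dimsOf π L (ℓ + 1)) (X ℓ) := by
  intro ℓ hℓ
  have hfac := factor_suppIn (hX ℓ (by omega))
  unfold dimsOf
  rw [if_pos hℓ]
  by_cases hℓ' : ℓ + 1 ≤ L - 1
  · rw [if_pos hℓ']
    have : (π ℓ).cols = (π (ℓ + 1)).rows := chainable_dims (h.2 ℓ (by omega))
    rw [← this]
    exact hfac
  · rw [if_neg hℓ']
    have : ℓ = L - 1 := by omega
    rw [this]
    exact (this ▸ hfac)

theorem mem_split {π : ℕ → Pattern} {L : ℕ} (h : ArchOK π L) (hL : 2 ≤ L)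
    {A : ℕ → ℕ → ℂ} (hA : A ∈ Bset π L) (s : ℕ) (hs1 : 1 ≤ s) (hs2 : s ≤ L - 1) :
    ∃ f g, IsFactorN (pprod π 0 (s - 1)) f ∧ IsFactorN (pprod π s (L - 1 - s)) g ∧
      A = nmul f g := by
  obtain ⟨u, rfl⟩ : ∃ u, s = u + 1 := ⟨s - 1, by omega⟩
  obtain ⟨X, hX, rfl⟩ := hA
  have hidx : L - 1 = u + 1 + (L - 1 - (u + 1)) := by omega
  have hdims := dims_suppIn h (by omega) hX
  have hsplit := nprod_split (X := X) (d := dimsOf π L) u (L - 1 - (u + 1))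
    (fun ℓ hℓ => hdims ℓ (by omega))
  refine ⟨nprod X u, nprod (fun ℓ => X (u + 1 + ℓ)) (L - 1 - (u + 1)), ?_, ?_, ?_⟩
  · exact nprod_factor h 0 u (by omega) X
      (fun ℓ hℓ => by rw [Nat.zero_add]; exact hX ℓ (by omega))
  · exact nprod_factor h (u + 1) (L - 1 - (u + 1)) (by omega) _
      (fun ℓ hℓ => hX (u + 1 + ℓ) (by omega))
  · conv_lhs => rw [hidx]
    rw [hsplit]

theorem mem_full_factor {π : ℕ → Pattern} {L : ℕ} (h : ArchOK π L) (hL : 1 ≤ L)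
    {A : ℕ → ℕ → ℂ} (hA : A ∈ Bset π L) : IsFactorN (pprod π 0 (L - 1)) A := by
  obtain ⟨X, hX, rfl⟩ := hA
  exact nprod_factor h 0 (L - 1) (by omega) X
    (fun ℓ hℓ => by rw [Nat.zero_add]; exact hX ℓ (by omega))

end Bf
namespace Bf

theorem rankOn_le_of_cols (Rs Cs CsA : Finset ℕ) (Bm A : ℕ → ℕ → ℂ)
    (h : ∀ k : ↥Cs, (fun i : ↥Rs => Bm i.1 k.1) ∈
      Submodule.span ℂ
        (Set.range (Matrix.of fun (i : ↥Rs) (j : ↥CsA) => A i.1 j.1).transpose)) :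
    rankOn Bm Rs Cs ≤ rankOn A Rs CsA :=
  rank_le_of_cols_in_span _ _ h

theorem span_col_transfer {R' Rρ CA' Cρ : Finset ℕ} {A : ℕ → ℕ → ℂ} {v : ℕ → ℂ}
    (hsub : ∀ i ∈ R', i ∈ Rρ) (hC : ∀ j ∈ Cρ, j ∈ CA')
    (hv : (fun i : ↥Rρ => v i.1) ∈ Submodule.span ℂ
      (Set.range (Matrix.of fun (i : ↥Rρ) (j : ↥Cρ) => A i.1 j.1).transpose)) :
    (fun i : ↥R' => v i.1) ∈ Submodule.span ℂ
      (Set.range (Matrix.of fun (i : ↥R') (j : ↥CA') => A i.1 j.1).transpose) := by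
  classical
  set g : ↥R' → ↥Rρ := fun i => ⟨i.1, hsub i.1 i.2⟩ with hg
  set res := LinearMap.funLeft ℂ ℂ g with hres
  have h2 : res (fun i : ↥Rρ => v i.1) ∈
      Submodule.map res (Submodule.span ℂ
        (Set.range (Matrix.of fun (i : ↥Rρ) (j : ↥Cρ) => A i.1 j.1).transpose)) :=
    Submodule.mem_map_of_mem hv
  rw [Submodule.map_span] at h2
  have h1 : res (fun i : ↥Rρ => v i.1) = fun i : ↥R' => v i.1 := rfl
  rw [h1] at h2
  have hle : Submodule.span ℂ
      (res '' Set.range (Matrix.of fun (i : ↥Rρ) (j : ↥Cρ) => A i.1 j.1).transpose) ≤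
      Submodule.span ℂ
        (Set.range (Matrix.of fun (i : ↥R') (j : ↥CA') => A i.1 j.1).transpose) := by
    rw [Submodule.span_le]
    rintro w ⟨_, ⟨j, rfl⟩, rfl⟩
    apply Submodule.subset_span
    exact ⟨⟨j.1, hC j.1 j.2⟩, rfl⟩
  exact hle h2

end Bf
namespace Bf

theorem main_rev (L : ℕ) (hL : 2 ≤ L) : ∀ π : ℕ → Pattern, ArchOK π L →
    ∀ A : ℕ → ℕ → ℂ,
    (∀ s, 1 ≤ s → s ≤ L - 1 →
      ∃ f g, IsFactorN (pprod π 0 (s - 1)) f ∧ IsFactorN (pprod π s (L - 1 - s)) g ∧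
        A = nmul f g) →
    A ∈ Bset π L := by
  induction L, hL using Nat.le_induction with
  | base =>
    intro π h A hsplit
    obtain ⟨f, g, hf, hg, rfl⟩ := hsplit 1 le_rfl (by omega)
    refine ⟨fun ℓ => if ℓ = 0 then f else g, ?_, rfl⟩
    intro ℓ hℓ
    interval_cases ℓ
    · exact hf
    · exact hg
  | succ L hL2 ih =>
    obtain ⟨n, rfl⟩ : ∃ n, L = n + 1 := ⟨L - 1, by omega⟩
    intro π h A hsplit
    have hn1 : 1 ≤ n := by omega
    -- the last split
    have hρspec := pprod_spec h n 0 (by omega)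
    set ρ := pprod π 0 n with hρdef
    set τ := π (n + 1) with hτdef
    have hρpos : ρ.Pos := hρspec.hpos
    have hτpos : τ.Pos := h.1 (n + 1) (by omega)
    have hcρτ : ρ.Chainable τ := by
      have hch := pprod_chainable h 0 n 0 (by omega)
      have e : 0 + n + 1 = n + 1 := by omega
      rw [e] at hch
      exact hch
    obtain ⟨f0, Y0, hf0, hY0, hA0⟩ := hsplit (n + 1) (by omega) (by omega)
    have hY0' : IsFactorN τ Y0 := by
      have e : n + 2 - 1 - (n + 1) = 0 := by omega
      rw [e] at hY0
      exact hY0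
    have hA_supp : IsFactorN (ρ * τ) A := by
      rw [hA0]
      exact factor_nmul hρpos hτpos hcρτ hf0 hY0'
    have hrkA : ∀ α δ, α < τ.a → δ < ρ.d → (blockM ρ τ A α δ).rank ≤ ρ.rk τ := by
      intro α δ hα hδ
      rw [hA0]
      exact rank_of_factors hρpos hτpos hcρτ hf0 hY0' hα hδ
    obtain ⟨B, Y, hBfac, hYfac, hAB, hspan⟩ := construct_two hρpos hτpos hcρτ A hA_supp hrkA
    -- B satisfies all splits of the shorter architecture
    have hALarch : ArchOK π (n + 1) :=
      ⟨fun ℓ hℓ => h.1 ℓ (by omega), fun ℓ hℓ => h.2 ℓ (by omega)⟩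
    have hBsplits : ∀ s, 1 ≤ s → s ≤ n + 1 - 1 →
        ∃ f g, IsFactorN (pprod π 0 (s - 1)) f ∧
          IsFactorN (pprod π s (n + 1 - 1 - s)) g ∧ B = nmul f g := by
      intro s hs1 hs2
      obtain ⟨u, rfl⟩ : ∃ u, s = u + 1 := ⟨s - 1, by omega⟩
      have hun : u + 1 ≤ n := by omega
      set σ := pprod π 0 u with hσdef
      set t' := n + 1 - 1 - (u + 1) with ht'def
      set tA := n + 1 - (u + 1) with htAdef
      set τ' := pprod π (u + 1) t' with hτ'def
      set τA := pprod π (u + 1) tA with hτAdef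
      have ht'n : u + 1 + t' = n := by omega
      have htAn : u + 1 + tA = n + 1 := by omega
      have sσ := pprod_spec h u 0 (by omega)
      have sτ' := pprod_spec h t' (u + 1) (by omega)
      have sτA := pprod_spec h tA (u + 1) (by omega)
      have hcστ' : σ.Chainable τ' := by
        have hch := pprod_chainable h 0 u t' (by omega)
        have e : 0 + u + 1 = u + 1 := by omega
        rw [e] at hch
        exact hch
      have hcστA : σ.Chainable τA := by
        have hch := pprod_chainable h 0 u tA (by omega)
        have e : 0 + u + 1 = u + 1 := by omega
        rw [e] at hch
        exact hch
      have hcτ'τ : τ'.Chainable τ := by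
        have hch := pprod_chainable h (u + 1) t' 0 (by omega)
        have e : u + 1 + t' + 1 = n + 1 := by omega
        rw [e] at hch
        exact hch
      have hτ'aA : τ'.a = τA.a := by
        rw [sτ'.ha, sτA.ha]
      have hrk_eq : σ.rk τA = σ.rk τ' := by
        unfold Pattern.rk
        rw [hτ'aA]
      have hRReq : ∀ α δ, Rcl σ τ' α δ = Rcl σ τA α δ := by
        intro α δ
        unfold Rcl
        rw [hτ'aA]
      have hrowseq : σ.rows = ρ.rows := by
        rw [rows_eq, rows_eq, sσ.ha, sσ.hbd, hρspec.ha, hρspec.hbd]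
      have hbdeq : σ.b * σ.d = ρ.b * ρ.d := sσ.hbd.trans hρspec.hbd.symm
      have hdd : ρ.d ∣ σ.d := by
        rw [hρspec.hd, sσ.hd]
        exact dvd_d h (0 + u) (0 + n) (by omega) (by omega)
      have hτdρd : τ.d ∣ ρ.d := hcρτ.2.2.2.2.2
      have hτdτ'd : τ.d ∣ τ'.d := hcτ'τ.2.2.2.2.2
      have hτ'cols : τ'.cols = τ.rows := by
        show τ'.a * τ'.c * τ'.d = τ.rows
        rw [sτ'.hac, sτ'.hd, ht'n]
        exact chainable_dims (h.2 n (by omega))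
      have hτAcols : τA.cols = τ.cols := by
        show τA.a * τA.c * τA.d = τ.cols
        rw [sτA.hac, sτA.hd, htAn]
        rfl
      have hτAd : τA.d = τ.d := by
        rw [sτA.hd, htAn]
      have hτ'τprod : τ' * τ = τA := by
        have hm := pprod_mul h (u + 1) t' 0 (by omega)
        have e1 : u + 1 + t' + 1 = n + 1 := by omega
        have e2 : t' + 0 + 1 = tA := by omega
        rw [e1, e2] at hm
        exact hm
      have hστ'prod : σ * τ' = ρ := by
        have hm := pprod_mul h 0 u t' (by omega)
        have e1 : 0 + u + 1 = u + 1 := by omega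
        have e2 : u + t' + 1 = n := by omega
        rw [e1, e2] at hm
        exact hm
      have hrkA_s : ∀ α δ, α < τA.a → δ < σ.d → (blockM σ τA A α δ).rank ≤ σ.rk τA := by
        obtain ⟨fs, gs, hfs, hgs, hAs⟩ := hsplit (u + 1) (by omega) (by omega)
        intro α δ hα hδ
        rw [hAs]
        exact rank_of_factors sσ.hpos sτA.hpos hcστA hfs hgs hα hδ
      apply (two_factor sσ.hpos sτ'.hpos hcστ' B).mpr
      constructor
      · rw [hστ'prod]
        exact hBfac
      · intro P hP
        obtain ⟨α', hα', δ', hδ', rfl⟩ := (classes_iff sσ.hpos sτ'.hpos hcστ').mp hP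
        rw [rowSupp_eq sσ.hpos sτ'.hpos hcστ' hα' hδ',
          colSupp_eq sσ.hpos sτ'.hpos hcστ' hα' hδ']
        have hstep2 : rankOn A (Rcl σ τ' α' δ') (Ccl σ τA α' δ') ≤ σ.rk τ' := by
          rw [hRReq α' δ', ← hrk_eq]
          exact hrkA_s α' δ' (hτ'aA ▸ hα') hδ'
        refine le_trans (rankOn_le_of_cols _ _ (Ccl σ τA α' δ') B A ?_) hstep2
        intro k
        have hk1 := mem_Ccl.mp k.2
        have hkτrows : (k : ℕ) < τ.rows := hτ'cols ▸ hk1.1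
        by_cases hcase : α' / (τ'.a / σ.a) = (k : ℕ) / (τ.b * τ.d) / (τ.a / ρ.a) ∧
            δ' % ρ.d = (k : ℕ) % ρ.d
        · -- column lies in the span
          have hsub : ∀ i ∈ Rcl σ τ' α' δ',
              i ∈ Rcl ρ τ ((k : ℕ) / (τ.b * τ.d)) ((k : ℕ) % ρ.d) := by
            intro i hi
            rw [mem_Rcl] at hi ⊢
            refine ⟨?_, ?_, ?_⟩
            · rw [← hrowseq]; exact hi.1
            · rw [← hbdeq, hi.2.1]; exact hcase.1
            · rw [← Nat.mod_mod_of_dvd i hdd, hi.2.2]; exact hcase.2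
          have hC : ∀ j ∈ Ccl ρ τ ((k : ℕ) / (τ.b * τ.d)) ((k : ℕ) % ρ.d),
              j ∈ Ccl σ τA α' δ' := by
            intro j hj
            rw [mem_Ccl] at hj ⊢
            obtain ⟨hj1, hj2, hj3⟩ := hj
            refine ⟨?_, ?_, ?_⟩
            · rw [hτAcols]; exact hj1
            · have hccd : τA.c * τA.d = τ.c * τ.d * (τ.a / τ'.a) := by
                rw [← hτ'τprod]
                exact ccd sτ'.hpos hcτ'τ
              rw [hccd, ← Nat.div_div_eq_div_mul, hj2,
                ← div_param sτ'.hpos hτpos hcτ'τ (k : ℕ)]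
              exact hk1.2.1
            · rw [hτAd, hj3, Nat.mod_mod_of_dvd (k : ℕ) hτdρd,
                ← Nat.mod_mod_of_dvd (k : ℕ) hτdτ'd, hk1.2.2,
                Nat.mod_mod_of_dvd δ' hτdτ'd]
          exact span_col_transfer (A := A) (v := fun x => B x (k : ℕ)) hsub hC
            (hspan (k : ℕ) hkτrows)
        · -- the column is zero
          have hzero : (fun i : ↥(Rcl σ τ' α' δ') => B i.1 (k : ℕ)) = 0 := by
            funext i
            apply hBfac
            rw [spatL_eq_ind hρpos hτpos hcρτ hkτrows, if_neg]
            intro hmem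
            apply hcase
            rw [mem_Rcl] at hmem
            have hi := mem_Rcl.mp i.2
            constructor
            · rw [← hi.2.1, hbdeq]; exact hmem.2.1
            · rw [← hmem.2.2, ← Nat.mod_mod_of_dvd i.1 hdd, hi.2.2]
          rw [hzero]
          exact Submodule.zero_mem _
    -- apply the induction hypothesis and append the last factor
    have hBmem := ih π hALarch B hBsplits
    obtain ⟨X', hX', hBprod⟩ := hBmem
    refine ⟨fun ℓ => if ℓ = n + 1 then Y else X' ℓ, ?_, ?_⟩
    · intro ℓ hℓ
      show IsFactorN (π ℓ) (if ℓ = n + 1 then Y else X' ℓ)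
      by_cases hℓn : ℓ = n + 1
      · rw [if_pos hℓn, hℓn]
        exact hYfac
      · rw [if_neg hℓn]
        exact hX' ℓ (by omega)
    · show A = nmul (nprod (fun ℓ => if ℓ = n + 1 then Y else X' ℓ) n)
        (if n + 1 = n + 1 then Y else X' (n + 1))
      have hcongr : nprod (fun ℓ => if ℓ = n + 1 then Y else X' ℓ) n = nprod X' n := by
        apply nprod_congr
        intro ℓ hℓ
        rw [if_neg (by omega)]
      have hBprod' : B = nprod X' n := hBprod
      rw [hcongr, if_pos rfl, ← hBprod', hAB]

end Bf
namespace Bf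

theorem split_facts {π : ℕ → Pattern} {L : ℕ} (h : ArchOK π L) (hL : 2 ≤ L) :
    ∀ u, u + 1 ≤ L - 1 →
      (pprod π 0 u).Pos ∧ (pprod π (u + 1) (L - 1 - (u + 1))).Pos ∧
      (pprod π 0 u).Chainable (pprod π (u + 1) (L - 1 - (u + 1))) ∧
      pprod π 0 u * pprod π (u + 1) (L - 1 - (u + 1)) = pprod π 0 (L - 1) ∧
      (pprod π 0 u).rk (pprod π (u + 1) (L - 1 - (u + 1))) = (π u).rk (π (u + 1)) := by
  intro u hu
  have e1 : 0 + u + 1 = u + 1 := by omega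
  have e0 : (0 : ℕ) + u = u := by omega
  refine ⟨(pprod_spec h u 0 (by omega)).hpos,
    (pprod_spec h (L - 1 - (u + 1)) (u + 1) (by omega)).hpos, ?_, ?_, ?_⟩
  · have hch := pprod_chainable h 0 u (L - 1 - (u + 1)) (by omega)
    rw [e1] at hch
    exact hch
  · have hm := pprod_mul h 0 u (L - 1 - (u + 1)) (by omega)
    have e2 : u + (L - 1 - (u + 1)) + 1 = L - 1 := by omega
    rw [e1, e2] at hm
    exact hm
  · have hr := pprod_rk h 0 u (L - 1 - (u + 1)) (by omega)
    rw [e1, e0] at hr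
    exact hr

end Bf

/-- **Corollary (complementary low-rank characterization).** For a chainable architecture of
depth `L ≥ 2`, `B^β = ⋂_{s=1}^{L-1} B^{β_s}`; equivalently, `A ∈ B^β` iff the support of `A`
is contained in that of `S_{π 0 * ⋯ * π (L-1)}` and all blocks `A[R_P, C_P]` associated with
the split at `s` have rank at most `r(π (s-1), π s)`. -/
theorem butterfly_characterization (L : ℕ) (hL : 2 ≤ L) (π : ℕ → Pattern)
    (hPos : ∀ ℓ < L, (π ℓ).Pos)
    (hch : ∀ ℓ, ℓ + 1 < L → Pattern.Chainable (π ℓ) (π (ℓ + 1)))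
    (A : ℕ → ℕ → ℂ) :
    (A ∈ Bset π L ↔
      ∀ s, 1 ≤ s → s ≤ L - 1 →
        A ∈ Bset (pairArch (pprod π 0 (s - 1)) (pprod π s (L - 1 - s))) 2) ∧
    (A ∈ Bset π L ↔
      IsFactorN (pprod π 0 (L - 1)) A ∧
      ∀ s, 1 ≤ s → s ≤ L - 1 →
        ∀ P ∈ classesN (SpatN (pprod π 0 (s - 1))) (SpatN (pprod π s (L - 1 - s)))
            (pprod π 0 (s - 1)).cols,
          rankOn A
              (rowSuppN (SpatN (pprod π 0 (s - 1))) (SpatN (pprod π s (L - 1 - s)))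
                (pprod π 0 (s - 1)).rows P)
              (colSuppN (SpatN (pprod π 0 (s - 1))) (SpatN (pprod π s (L - 1 - s)))
                (pprod π s (L - 1 - s)).cols P) ≤
            Pattern.rk (π (s - 1)) (π s)) := by
  have h : Bf.ArchOK π L := ⟨hPos, hch⟩
  have hfacts := Bf.split_facts h hL
  constructor
  · constructor
    · intro hA s hs1 hs2
      obtain ⟨u, rfl⟩ : ∃ u, s = u + 1 := ⟨s - 1, by omega⟩
      obtain ⟨f, g, hf, hg, hfg⟩ := Bf.mem_split h hL hA (u + 1) hs1 hs2
      exact (Bf.pair_mem_iff A).mpr ⟨f, g, hf, hg, hfg⟩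
    · intro hs
      apply Bf.main_rev L hL π h A
      intro s hs1 hs2
      obtain ⟨u, rfl⟩ : ∃ u, s = u + 1 := ⟨s - 1, by omega⟩
      exact (Bf.pair_mem_iff A).mp (hs (u + 1) hs1 hs2)
  · constructor
    · intro hA
      refine ⟨Bf.mem_full_factor h (by omega) hA, ?_⟩
      intro s hs1 hs2 P hP
      obtain ⟨u, rfl⟩ : ∃ u, s = u + 1 := ⟨s - 1, by omega⟩
      obtain ⟨hp1, hp2, hc, hprodeq, hrkeq⟩ := hfacts u (by omega)
      obtain ⟨f, g, hf, hg, hfg⟩ := Bf.mem_split h hL hA (u + 1) hs1 hs2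
      have hle := ((Bf.two_factor hp1 hp2 hc A).mp ⟨f, g, hf, hg, hfg⟩).2 P hP
      exact le_trans hle (le_of_eq hrkeq)
    · rintro ⟨hsupp, hranks⟩
      apply Bf.main_rev L hL π h A
      intro s hs1 hs2
      obtain ⟨u, rfl⟩ : ∃ u, s = u + 1 := ⟨s - 1, by omega⟩
      obtain ⟨hp1, hp2, hc, hprodeq, hrkeq⟩ := hfacts u (by omega)
      apply (Bf.two_factor hp1 hp2 hc A).mpr
      refine ⟨?_, ?_⟩
      · rw [hprodeq]
        exact hsupp
      · intro P hP
        have hle := hranks (u + 1) hs1 hs2 P hP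
        exact le_trans hle (le_of_eq hrkeq.symm)
end

section
/- Let (π₁, π₂, π₃) be a chainable architecture of depth 3 and Aᵢ ∈ D^{πᵢ} for i = 1, 2, 3. If A₁ is left-r(π₁,π₂)-unitary and A₃ is right-r(π₂,π₃)-unitary, then ‖A₁A₂A₃‖_F = ‖A₂‖_F. -/
open scoped Kronecker

/-- A `π`-factor `X` is *left-`r`-unitary* if `r ∣ c` and `‖XY‖_F = ‖Y‖_F` for every
`π'`-factor `Y` with `(π, π')` chainable and `r(π, π') = r`. -/
def LeftRUnitary (π : Pattern) (r : ℕ) (X : ℕ → ℕ → ℂ) : Prop :=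
  r ∣ π.c ∧ ∀ π' : Pattern, π'.Pos → Pattern.Chainable π π' → Pattern.rk π π' = r →
    ∀ Y : ℕ → ℕ → ℂ, IsFactorN π' Y → nfrob (nmul X Y) = nfrob Y

/-- A `π`-factor `X` is *right-`r`-unitary* if `r ∣ b` and `‖YX‖_F = ‖Y‖_F` for every
`π'`-factor `Y` with `(π', π)` chainable and `r(π', π) = r`. -/
def RightRUnitary (π : Pattern) (r : ℕ) (X : ℕ → ℕ → ℂ) : Prop :=
  r ∣ π.b ∧ ∀ π' : Pattern, π'.Pos → Pattern.Chainable π' π → Pattern.rk π' π = r →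
    ∀ Y : ℕ → ℕ → ℂ, IsFactorN π' Y → nfrob (nmul Y X) = nfrob Y

lemma factor_suppIn {π : Pattern} {X} (h : IsFactorN π X) : SuppIn π.rows π.cols X := by
  intro i j hX
  by_contra hc
  exact hX (h i j (dif_neg hc))

lemma spatN_ne_iff {π : Pattern} {i j : ℕ} :
    SpatN π i j ≠ 0 ↔ i < π.rows ∧ j < π.cols ∧ i % π.d = j % π.d ∧ i / π.d / π.b = j / π.d / π.c := by
  constructor
  · intro h
    rcases Decidable.em (i < π.rows ∧ j < π.cols) with hb | hb
    · rw [SpatN, dif_pos hb] at h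
      refine ⟨hb.1, hb.2, ?_⟩
      simp [Pattern.S, kron3Equiv, Matrix.one_apply, finProdFinEquiv, Fin.divNat, Fin.modNat,
        Fin.ext_iff, Matrix.submatrix_apply, Matrix.kroneckerMap_apply, Pattern.rows, Pattern.cols] at h
      exact h
    · exact absurd (dif_neg hb) h
  · rintro ⟨h1, h2, h3, h4⟩
    rw [SpatN, dif_pos ⟨h1, h2⟩]
    simp [Pattern.S, kron3Equiv, Matrix.one_apply, finProdFinEquiv, Fin.divNat, Fin.modNat,
      Fin.ext_iff, Matrix.submatrix_apply, Matrix.kroneckerMap_apply, Pattern.rows, Pattern.cols]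
    exact ⟨h3, h4⟩

lemma nmul_eq_sum {f g : ℕ → ℕ → ℂ} {i j N : ℕ} (h : ∀ k, N ≤ k → f i k * g k j = 0) :
    nmul f g i j = ∑ k ∈ Finset.range N, f i k * g k j := by
  apply tsum_eq_sum
  intro k hk
  exact h k (le_of_not_gt (by simpa using hk))

lemma nmul_assoc {f g h : ℕ → ℕ → ℂ} {M N : ℕ}
    (hf : ∀ i k, M ≤ k → f i k = 0) (hh : ∀ k j, N ≤ k → h k j = 0) :
    nmul (nmul f g) h = nmul f (nmul g h) := by
  funext i j
  have e1 : nmul (nmul f g) h i j = ∑ k ∈ Finset.range N, (nmul f g) i k * h k j :=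
    nmul_eq_sum (fun k hk => by rw [hh k j hk, mul_zero])
  have e2 : nmul f (nmul g h) i j = ∑ l ∈ Finset.range M, f i l * (nmul g h) l j :=
    nmul_eq_sum (fun l hl => by rw [hf i l hl, zero_mul])
  have e3 : ∀ k, (nmul f g) i k = ∑ l ∈ Finset.range M, f i l * g l k :=
    fun k => nmul_eq_sum (fun l hl => by rw [hf i l hl, zero_mul])
  have e4 : ∀ l, (nmul g h) l j = ∑ k ∈ Finset.range N, g l k * h k j :=
    fun l => nmul_eq_sum (fun k hk => by rw [hh k j hk, mul_zero])
  rw [e1, e2]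
  simp only [e3, e4, Finset.sum_mul, Finset.mul_sum, mul_assoc]
  exact Finset.sum_comm

lemma prod_factor {π₂ π₃ : Pattern} (h₂ : π₂.Pos) (h₂₃ : Pattern.Chainable π₂ π₃)
    {A₂ A₃ : ℕ → ℕ → ℂ} (hA₂ : IsFactorN π₂ A₂) (hA₃ : IsFactorN π₃ A₃) :
    IsFactorN ⟨π₂.a, π₂.b * π₂.d, π₃.a / π₂.a * (π₃.c * π₃.d), 1⟩ (nmul A₂ A₃) := by
  intro i j hS
  have hm : π₂.a * (π₃.a / π₂.a) = π₃.a := Nat.mul_div_cancel' h₂₃.2.2.2.2.1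
  have hr1 : π₃.a * (π₂.a * π₂.c / π₃.a) = π₂.a * π₂.c := Nat.mul_div_cancel' h₂₃.1
  have hr2 : π₂.d * (π₃.b * π₃.d / π₂.d) = π₃.b * π₃.d := Nat.mul_div_cancel' h₂₃.2.1
  have key : π₂.c * π₂.d = π₃.b * π₃.d * (π₃.a / π₂.a) := by
    apply Nat.eq_of_mul_eq_mul_left h₂.1
    calc π₂.a * (π₂.c * π₂.d) = π₂.a * π₂.c * π₂.d := by ring
      _ = π₃.a * (π₂.a * π₂.c / π₃.a) * π₂.d := by rw [hr1]
      _ = π₃.a * (π₃.b * π₃.d / π₂.d) * π₂.d := by rw [h₂₃.2.2.1]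
      _ = π₃.a * (π₂.d * (π₃.b * π₃.d / π₂.d)) := by ring
      _ = π₃.a * (π₃.b * π₃.d) := by rw [hr2]
      _ = π₂.a * (π₃.a / π₂.a) * (π₃.b * π₃.d) := by rw [hm]
      _ = π₂.a * (π₃.b * π₃.d * (π₃.a / π₂.a)) := by ring
  have hzero : ∀ k, A₂ i k * A₃ k j = 0 := by
    intro k
    by_contra hne
    obtain ⟨h2, h3⟩ := mul_ne_zero_iff.mp hne
    obtain ⟨hi2, hk2, -, e2⟩ := spatN_ne_iff.mp (fun h => h2 (hA₂ i k h))
    obtain ⟨hk3, hj3, -, e3⟩ := spatN_ne_iff.mp (fun h => h3 (hA₃ k j h))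
    apply absurd hS
    rw [← Ne, spatN_ne_iff]
    simp only [Pattern.rows, Pattern.cols, Nat.mod_one, Nat.div_one]
    refine ⟨?_, ?_, trivial, ?_⟩
    · calc i < π₂.a * π₂.b * π₂.d := hi2
        _ = π₂.a * (π₂.b * π₂.d) * 1 := by ring
    · calc j < π₃.a * π₃.c * π₃.d := hj3
        _ = π₂.a * (π₃.a / π₂.a) * (π₃.c * π₃.d) := by rw [hm]; ring
        _ = π₂.a * (π₃.a / π₂.a * (π₃.c * π₃.d)) * 1 := by ring
    · calc i / (π₂.b * π₂.d) = i / (π₂.d * π₂.b) := by rw [mul_comm]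
        _ = i / π₂.d / π₂.b := (Nat.div_div_eq_div_mul _ _ _).symm
        _ = k / π₂.d / π₂.c := e2
        _ = k / (π₂.d * π₂.c) := Nat.div_div_eq_div_mul _ _ _
        _ = k / (π₂.c * π₂.d) := by rw [mul_comm]
        _ = k / (π₃.b * π₃.d * (π₃.a / π₂.a)) := by rw [key]
        _ = k / (π₃.b * π₃.d) / (π₃.a / π₂.a) := (Nat.div_div_eq_div_mul _ _ _).symm
        _ = k / (π₃.d * π₃.b) / (π₃.a / π₂.a) := by rw [mul_comm π₃.b]
        _ = k / π₃.d / π₃.b / (π₃.a / π₂.a) := by rw [Nat.div_div_eq_div_mul k π₃.d π₃.b]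
        _ = j / π₃.d / π₃.c / (π₃.a / π₂.a) := by rw [e3]
        _ = j / (π₃.d * π₃.c) / (π₃.a / π₂.a) := by rw [Nat.div_div_eq_div_mul j π₃.d π₃.c]
        _ = j / (π₃.d * π₃.c * (π₃.a / π₂.a)) := Nat.div_div_eq_div_mul _ _ _
        _ = j / (π₃.a / π₂.a * (π₃.c * π₃.d)) := by ring_nf
  simp only [nmul, hzero, tsum_zero]

/-- **Lemma.** For a chainable architecture `(π₁, π₂, π₃)` and factors `Aᵢ ∈ D^{πᵢ}`, if `A₁`
is left-`r(π₁,π₂)`-unitary and `A₃` is right-`r(π₂,π₃)`-unitary, then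
`‖A₁A₂A₃‖_F = ‖A₂‖_F`. -/
theorem unitary_sandwich_norm (π₁ π₂ π₃ : Pattern)
    (h₁ : π₁.Pos) (h₂ : π₂.Pos) (h₃ : π₃.Pos)
    (h₁₂ : Pattern.Chainable π₁ π₂) (h₂₃ : Pattern.Chainable π₂ π₃)
    (A₁ A₂ A₃ : ℕ → ℕ → ℂ)
    (hA₁ : IsFactorN π₁ A₁) (hA₂ : IsFactorN π₂ A₂) (hA₃ : IsFactorN π₃ A₃)
    (hL : LeftRUnitary π₁ (Pattern.rk π₁ π₂) A₁)
    (hR : RightRUnitary π₃ (Pattern.rk π₂ π₃) A₃) :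
    nfrob (nmul (nmul A₁ A₂) A₃) = nfrob A₂ := by
  have hf : ∀ i k, π₁.cols ≤ k → A₁ i k = 0 := by
    intro i k hk
    by_contra hne
    exact absurd (factor_suppIn hA₁ i k hne).2 (not_lt.mpr hk)
  have hh : ∀ k j, π₃.rows ≤ k → A₃ k j = 0 := by
    intro k j hk
    by_contra hne
    exact absurd (factor_suppIn hA₃ k j hne).1 (not_lt.mpr hk)
  rw [nmul_assoc hf hh]
  set π' : Pattern := ⟨π₂.a, π₂.b * π₂.d, π₃.a / π₂.a * (π₃.c * π₃.d), 1⟩ with hπ'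
  have hfact : IsFactorN π' (nmul A₂ A₃) := prod_factor h₂ h₂₃ hA₂ hA₃
  have hmpos : 0 < π₃.a / π₂.a :=
    Nat.div_pos (Nat.le_of_dvd h₃.1 h₂₃.2.2.2.2.1) h₂.1
  have hpos : π'.Pos :=
    ⟨h₂.1, mul_pos h₂.2.1 h₂.2.2.2, mul_pos hmpos (mul_pos h₃.2.2.1 h₃.2.2.2), one_pos⟩
  have hchain : Pattern.Chainable π₁ π' := by
    refine ⟨h₁₂.1, ?_, ?_, h₁₂.2.2.2.1, h₁₂.2.2.2.2.1, one_dvd _⟩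
    · show π₁.d ∣ π₂.b * π₂.d * 1
      rw [mul_one]; exact h₁₂.2.1
    · show π₁.a * π₁.c / π₂.a = π₂.b * π₂.d * 1 / π₁.d
      rw [mul_one]; exact h₁₂.2.2.1
  rw [hL.2 π' hpos hchain rfl _ hfact]
  exact hR.2 π₂ h₂ h₂₃ rfl A₂ hA₂
end
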